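/- arXiv:2008.04539 — 5 statements merged into one kernel-verified Lean document; each statement's English description precedes it below -/
import Mathlib

section
/- If A is a 2-generic subset of ℕ (i.e., A meets or avoids every Σ⁰₂ set of binary strings) and Φ is a Turing functional such that Φ^A is total and nonrecursive, then there exists an initial segment σ of A such that for all strings τ extending σ: (1) for every x there is ρ ⊇ τ with Φ^ρ(x) defined, and (2) there exist ρ, π extending τ and some x with Φ^ρ(x) and Φ^π(x) both defined and unequal (a Φ-splitting above τ). -/
/-- Finite binary strings. -/
abbrev BStr := List Bool

/-- The length-`k` initial segment of an infinite sequence, as a finite string. -/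
def seg {α : Type} (A : ℕ → α) (k : ℕ) : List α := (List.range k).map A

/-- A Σ⁰₁ (r.e.) set of binary strings. -/
def Sigma01 (V : Set BStr) : Prop :=
  ∃ f : BStr → ℕ → Bool, Computable₂ f ∧ ∀ σ, σ ∈ V ↔ ∃ n, f σ n = true

/-- A Σ⁰₂ set of binary strings. -/
def Sigma02 (V : Set BStr) : Prop :=
  ∃ f : BStr → ℕ × ℕ → Bool, Computable₂ f ∧ ∀ σ, σ ∈ V ↔ ∃ m, ∀ n, f σ (m, n) = true

/-- `A` meets the set of strings `V`. -/
def Meets (A : ℕ → Bool) (V : Set BStr) : Prop := ∃ k, seg A k ∈ V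

/-- `A` avoids the set of strings `V`. -/
def Avoids (A : ℕ → Bool) (V : Set BStr) : Prop := ∃ k, ∀ τ, seg A k <+: τ → τ ∉ V

/-- `A` is 1-generic. -/
def OneGeneric (A : ℕ → Bool) : Prop := ∀ V, Sigma01 V → Meets A V ∨ Avoids A V

/-- `A` is 2-generic. -/
def TwoGeneric (A : ℕ → Bool) : Prop := ∀ V, Sigma02 V → Meets A V ∨ Avoids A V

/-- A Turing functional: a computable, oracle-use-monotone map from finite oracle
strings to partial values. -/
structure Functional (α β : Type) [Primcodable α] [Primcodable β] where
  φ : List α → ℕ → Option β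
  comp : Computable₂ φ
  mono : ∀ {σ τ : List α} {x : ℕ} {b : β}, σ <+: τ → φ σ x = some b → φ τ x = some b

/-- `Φ^A = B` (in particular `Φ^A` is total). -/
def FunApplies {α β : Type} [Primcodable α] [Primcodable β]
    (Φ : Functional α β) (A : ℕ → α) (B : ℕ → β) : Prop :=
  ∀ x, ∃ k, Φ.φ (seg A k) x = some (B x)

/-- Turing reducibility `B ≤_T A`. -/
def TuringLE {α β : Type} [Primcodable α] [Primcodable β] (B : ℕ → β) (A : ℕ → α) : Prop :=
  ∃ Φ : Functional α β, FunApplies Φ A B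

/-- Turing equivalence `B ≡_T A`. -/
def TuringEquiv {α β : Type} [Primcodable α] [Primcodable β] (B : ℕ → β) (A : ℕ → α) : Prop :=
  TuringLE B A ∧ TuringLE A B

/-- A tree: a set of strings closed under initial segments. -/
def IsTree {α : Type} (T : Set (List α)) : Prop := ∀ σ τ : List α, σ <+: τ → τ ∈ T → σ ∈ T

/-- A recursive tree. -/
def RecTree {α : Type} [Primcodable α] (T : Set (List α)) : Prop :=
  IsTree T ∧ ∃ f : List α → Bool, Computable f ∧ ∀ σ, σ ∈ T ↔ f σ = true

/-- Every string on the tree has a proper extension on the tree. -/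
def ExtendibleTree {α : Type} (T : Set (List α)) : Prop :=
  ∀ σ ∈ T, ∃ τ ∈ T, σ <+: τ ∧ σ ≠ τ

/-- The set `[T]` of infinite paths through the tree `T`. -/
def paths {α : Type} (T : Set (List α)) : Set (ℕ → α) := {X | ∀ k, seg X k ∈ T}

/-- A clopen subset of the path space: a finite union of basic cylinders. -/
def ClopenC {α : Type} (N : Set (ℕ → α)) : Prop :=
  ∃ F : Finset (List α), N = {X | ∃ σ ∈ F, seg X σ.length = σ}

/-- A Π⁰₁ class: the set of paths through a recursive tree. -/
def Pi01C {α : Type} [Primcodable α] (P : Set (ℕ → α)) : Prop := ∃ T, RecTree T ∧ P = paths T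

/-- A thin Π⁰₁ class: every Π⁰₁ subclass is the intersection with a clopen set. -/
def ThinPi01 {α : Type} [Primcodable α] (P : Set (ℕ → α)) : Prop :=
  Pi01C P ∧ ∀ Q, Pi01C Q → Q ⊆ P → ∃ N, ClopenC N ∧ Q = P ∩ N

/-- `A` is of thin-free degree: no set Turing equivalent to `A` belongs to a thin Π⁰₁ class. -/
def ThinFreeDegree (A : ℕ → Bool) : Prop :=
  ∀ B : ℕ → Bool, TuringEquiv B A → ∀ P : Set (ℕ → Bool), ThinPi01 P → B ∉ P

open Classical in
/-- The halting problem `0′`. -/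
noncomputable def K : ℕ → Bool := fun n =>
  if (Nat.Partrec.Code.eval (Denumerable.ofNat Nat.Partrec.Code n) n).Dom then true else false

/-- A recursive (limit-lemma) approximation of `A`. -/
def RecApprox (σs : ℕ → BStr) (A : ℕ → Bool) : Prop :=
  Computable σs ∧ ∀ n, ∃ s0, ∀ s ≥ s0, (σs s).take n = seg A n

/-- `τ` is an initial segment of `A`. -/
def InitSegOf {α : Type} (τ : List α) (A : ℕ → α) : Prop := τ = seg A τ.length

/-- A recursively enumerable set of natural numbers. -/
def REset (S : Set ℕ) : Prop :=
  ∃ f : ℕ → ℕ → Bool, Computable₂ f ∧ ∀ s, s ∈ S ↔ ∃ n, f s n = true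

/-- A Σ₁-correct approximation: every infinite r.e. set of stages contains a stage
whose approximating string is a true initial segment of `A`. -/
def SigmaOneCorrect (σs : ℕ → BStr) (A : ℕ → Bool) : Prop :=
  ∀ S : Set ℕ, REset S → S.Infinite → ∃ s ∈ S, InitSegOf (σs s) A

/- ------------------- auxiliary material ------------------- -/

lemma seg_prefix_seg {α : Type} (A : ℕ → α) {i j : ℕ} (h : i ≤ j) : seg A i <+: seg A j := by
  have : (seg A j).take i = seg A i := by
    simp [seg, ← List.map_take, List.take_range, Nat.min_eq_left h]
  exact this ▸ List.take_prefix i (seg A j)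

/-- Test for `V₁`: no extension of `τ` converges at `m`. -/
def convTest (Φ : Functional Bool Bool) (τ : BStr) (p : ℕ × ℕ) : Bool :=
  Option.casesOn (Encodable.decode p.2 : Option BStr) true
    fun δ => !(Φ.φ (τ ++ δ) p.1).isSome

lemma convTest_comp (Φ : Functional Bool Bool) : Computable₂ (convTest Φ) := by
  have happ : Computable fun b : (BStr × (ℕ × ℕ)) × BStr => b.1.1 ++ b.2 :=
    (Primrec.list_append.to_comp).comp (Computable.fst.comp Computable.fst) Computable.snd
  have hx : Computable fun b : (BStr × (ℕ × ℕ)) × BStr => b.1.2.1 :=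
    Computable.fst.comp (Computable.snd.comp Computable.fst)
  exact Computable.option_casesOn
    (Computable.decode.comp (Computable.snd.comp Computable.snd))
    (Computable.const true)
    (Primrec.not.to_comp.comp (Primrec.option_isSome.to_comp.comp (Φ.comp.comp happ hx)))

/-- Test for `W`: no `Φ`-splitting above `τ`. -/
def splitTest (Φ : Functional Bool Bool) (τ : BStr) (p : ℕ × ℕ) : Bool :=
  Option.casesOn (Encodable.decode p.2 : Option (BStr × BStr × ℕ)) true
    fun q => !((Φ.φ (τ ++ q.1) q.2.2).isSome &&
      ((Φ.φ (τ ++ q.2.1) q.2.2).isSome &&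
        !(decide (Φ.φ (τ ++ q.1) q.2.2 = Φ.φ (τ ++ q.2.1) q.2.2))))

lemma splitTest_comp (Φ : Functional Bool Bool) : Computable₂ (splitTest Φ) := by
  have hx : Computable fun b : (BStr × (ℕ × ℕ)) × (BStr × BStr × ℕ) => b.2.2.2 :=
    Computable.snd.comp (Computable.snd.comp Computable.snd)
  have c1 : Computable fun b : (BStr × (ℕ × ℕ)) × (BStr × BStr × ℕ) =>
      Φ.φ (b.1.1 ++ b.2.1) b.2.2.2 :=
    Φ.comp.comp ((Primrec.list_append.to_comp).comp (Computable.fst.comp Computable.fst)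
      (Computable.fst.comp Computable.snd)) hx
  have c2 : Computable fun b : (BStr × (ℕ × ℕ)) × (BStr × BStr × ℕ) =>
      Φ.φ (b.1.1 ++ b.2.2.1) b.2.2.2 :=
    Φ.comp.comp ((Primrec.list_append.to_comp).comp (Computable.fst.comp Computable.fst)
      (Computable.fst.comp (Computable.snd.comp Computable.snd))) hx
  exact Computable.option_casesOn
    (Computable.decode.comp (Computable.snd.comp Computable.snd))
    (Computable.const true)
    (Primrec.not.to_comp.comp ((Primrec.and.to_comp).comp
      (Primrec.option_isSome.to_comp.comp c1)
      ((Primrec.and.to_comp).comp (Primrec.option_isSome.to_comp.comp c2)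
        (Primrec.not.to_comp.comp ((Primrec.eq.decide.to_comp).comp c1 c2)))))

/-- If `A` is 2-generic and `Φ^A = B` is total and nonrecursive, then some
initial segment `σ = A↾k` of `A` is such that above every `τ ⊇ σ` computations of `Φ`
converge densely and `Φ`-splittings exist. -/
theorem two_generic_splitting (A : ℕ → Bool) (Φ : Functional Bool Bool) (B : ℕ → Bool)
    (hA : TwoGeneric A) (hTot : FunApplies Φ A B) (hNR : ¬ Computable B) :
    ∃ k : ℕ, ∀ τ : BStr, seg A k <+: τ →
      (∀ x : ℕ, ∃ ρ : BStr, τ <+: ρ ∧ ∃ b : Bool, Φ.φ ρ x = some b) ∧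
      (∃ ρ π : BStr, ∃ x : ℕ, ∃ b c : Bool, τ <+: ρ ∧ τ <+: π ∧
        Φ.φ ρ x = some b ∧ Φ.φ π x = some c ∧ b ≠ c) := by
  -- the Σ⁰₂ set V₁ : some x has no convergent extension
  set V₁ : Set BStr := {τ | ∃ x : ℕ, ∀ δ : BStr, Φ.φ (τ ++ δ) x = none} with hV₁def
  have hV₁ : Sigma02 V₁ := by
    refine ⟨convTest Φ, convTest_comp Φ, fun σ => ?_⟩
    constructor
    · rintro ⟨x, hx⟩
      refine ⟨x, fun n => ?_⟩
      rcases h : (Encodable.decode n : Option BStr) with _ | δ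
      · simp [convTest, h]
      · simp [convTest, h, hx δ]
    · rintro ⟨m, hm⟩
      refine ⟨m, fun δ => ?_⟩
      have := hm (Encodable.encode δ)
      simpa [convTest, Encodable.encodek, Option.isSome_iff_ne_none] using this
  -- the Σ⁰₂ (in fact Π⁰₁) set W : no Φ-splitting above τ
  set W : Set BStr := {τ | ∀ δ₁ δ₂ : BStr, ∀ x : ℕ,
      Φ.φ (τ ++ δ₁) x = none ∨ Φ.φ (τ ++ δ₂) x = none ∨
      Φ.φ (τ ++ δ₁) x = Φ.φ (τ ++ δ₂) x} with hWdef
  have hW : Sigma02 W := by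
    refine ⟨splitTest Φ, splitTest_comp Φ, fun σ => ?_⟩
    constructor
    · rintro hσ
      refine ⟨0, fun n => ?_⟩
      rcases h : (Encodable.decode n : Option (BStr × BStr × ℕ)) with _ | ⟨δ₁, δ₂, x⟩
      · simp [splitTest, h]
      · rcases hσ δ₁ δ₂ x with h1 | h1 | h1 <;> simp [splitTest, h, h1]
    · rintro ⟨m, hm⟩ δ₁ δ₂ x
      have := hm (Encodable.encode (δ₁, δ₂, x))
      simp only [splitTest, Encodable.encodek, Bool.not_eq_true', Bool.and_eq_false_iff,
        Bool.not_eq_false, decide_eq_true_eq, Bool.not_eq_true] at this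
      rcases this with h | h | h
      · exact Or.inl (Option.not_isSome_iff_eq_none.mp (by simp [h]))
      · exact Or.inr (Or.inl (Option.not_isSome_iff_eq_none.mp (by simp [h])))
      · exact Or.inr (Or.inr (by simpa using h))
  -- A cannot meet V₁
  rcases hA V₁ hV₁ with hM | ⟨k₁, hk₁⟩
  · exfalso
    obtain ⟨k, x, hx⟩ := hM
    obtain ⟨k', hk'⟩ := hTot x
    obtain ⟨δ, hδ⟩ := seg_prefix_seg A (le_max_left k k')
    have hconv : Φ.φ (seg A (max k k')) x = some (B x) :=
      Φ.mono (seg_prefix_seg A (le_max_right k k')) hk'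
    rw [← hδ] at hconv
    rw [hx δ] at hconv
    exact absurd hconv (by simp)
  -- A cannot meet W, else B would be computable
  rcases hA W hW with hM | ⟨k₂, hk₂⟩
  · exfalso
    apply hNR
    obtain ⟨k, hfree⟩ := hM
    set σ₀ : BStr := seg A k with hσ₀
    -- search functional
    set F : ℕ → ℕ → Option Bool := fun x n =>
      (Encodable.decode n : Option BStr).bind fun δ => Φ.φ (σ₀ ++ δ) x with hFdef
    have hF : Computable₂ F := by
      exact Computable.option_bind
        (Computable.decode.comp Computable.snd)
        (Φ.comp.comp ((Primrec.list_append.to_comp).comp (Computable.const σ₀) Computable.snd)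
          (Computable.fst.comp Computable.fst))
    have hPart : Partrec fun x => Nat.rfindOpt (F x) := Partrec.rfindOpt hF
    refine Partrec.of_eq_tot hPart fun x => ?_
    -- totality witness
    obtain ⟨k', hk'⟩ := hTot x
    obtain ⟨δ, hδ⟩ := seg_prefix_seg A (le_max_left k k')
    have hconv : Φ.φ (σ₀ ++ δ) x = some (B x) := by
      rw [hδ]
      exact Φ.mono (seg_prefix_seg A (le_max_right k k')) hk'
    have hdom : (Nat.rfindOpt (F x)).Dom := by
      refine Nat.rfindOpt_dom.2 ⟨Encodable.encode δ, B x, ?_⟩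
      simp [hFdef, Encodable.encodek, hconv]
    -- any output equals B x
    have hget : (Nat.rfindOpt (F x)).get hdom ∈ Nat.rfindOpt (F x) := Part.get_mem hdom
    obtain ⟨n, hn⟩ := Nat.rfindOpt_spec hget
    rcases Option.bind_eq_some_iff.mp hn with ⟨δ', hδ', hφ⟩
    have : (Nat.rfindOpt (F x)).get hdom = B x := by
      rcases hfree δ' δ x with h | h | h
      · rw [hφ] at h; exact absurd h (by simp)
      · rw [hconv] at h; exact absurd h (by simp)
      · rw [hφ, hconv] at h
        exact Option.some.inj h
    rw [← this]
    exact hget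
  -- conclusion
  refine ⟨max k₁ k₂, fun τ hτ => ?_⟩
  have h1 := hk₁ τ ((seg_prefix_seg A (le_max_left k₁ k₂)).trans hτ)
  have h2 := hk₂ τ ((seg_prefix_seg A (le_max_right k₁ k₂)).trans hτ)
  constructor
  · intro x
    rw [hV₁def] at h1
    simp only [Set.mem_setOf_eq, not_exists, not_forall] at h1
    obtain ⟨δ, hδ⟩ := h1 x
    rcases Option.ne_none_iff_exists'.mp hδ with ⟨b, hb⟩
    exact ⟨τ ++ δ, ⟨δ, rfl⟩, b, hb⟩
  · rw [hWdef] at h2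
    simp only [Set.mem_setOf_eq, not_forall] at h2
    obtain ⟨δ₁, δ₂, x, hx⟩ := h2
    push_neg at hx
    obtain ⟨hn1, hn2, hne⟩ := hx
    rcases Option.ne_none_iff_exists'.mp hn1 with ⟨b, hb⟩
    rcases Option.ne_none_iff_exists'.mp hn2 with ⟨c, hc⟩
    refine ⟨τ ++ δ₁, τ ++ δ₂, x, b, c, ⟨δ₁, rfl⟩, ⟨δ₂, rfl⟩, hb, hc, ?_⟩
    intro hbc
    apply hne
    rw [hb, hc, hbc]
end

section
/- If a Π⁰₁ class P = [T] (T a recursive tree) contains a set B that is total, nonrecursive, and of the form Φ^A for a 2-generic set A, then P is not thin: there is a recursive subtree S of T such that [S] is not the intersection of [T] with any clopen subset of 2^ω. -/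
/-! ### Auxiliary development for Statement 4 -/

namespace NotThinAux

open Encodable

/-- basic: length of a segment -/
lemma seg_length {α : Type} (X : ℕ → α) (k : ℕ) : (seg X k).length = k := by
  simp [seg]

lemma seg_getD (X : ℕ → Bool) {x k : ℕ} (h : x < k) : (seg X k).getD x false = X x := by
  simp [seg, List.getD_eq_getElem?_getD, List.getElem?_map, List.getElem?_range h]

lemma seg_take {α : Type} (X : ℕ → α) {k K : ℕ} (h : k ≤ K) :
    (seg X K).take k = seg X k := by
  simp [seg, ← List.map_take, List.take_range, Nat.min_eq_left h]

lemma seg_prefix {α : Type} (X : ℕ → α) {k K : ℕ} (h : k ≤ K) :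
    seg X k <+: seg X K := by
  rw [← seg_take X h]; exact List.take_prefix _ _

lemma prefix_seg {α : Type} {σ : List α} {X : ℕ → α} {m : ℕ} (h : σ <+: seg X m) :
    σ = seg X σ.length := by
  have h1 : σ = (seg X m).take σ.length := List.prefix_iff_eq_take.1 h
  have h2 : σ.length ≤ m := by
    have := h.length_le; rwa [seg_length] at this
  conv_lhs => rw [h1]
  rw [seg_take X h2]

lemma seg_ext {x : ℕ} {X Z : ℕ → Bool} (h : seg X (x+1) = seg Z (x+1)) : X x = Z x := by
  have hx := seg_getD X (Nat.lt_succ_self x)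
  have hz := seg_getD Z (Nat.lt_succ_self x)
  rw [← hx, ← hz, h]

/-- Boolean prefix test for binary strings -/
def prefBool (σ τ : BStr) : Bool :=
  decide (σ.length ≤ τ.length) && decide ((((List.range σ.length)).map fun i => τ.getD i false) = σ)

lemma prefBool_iff {σ τ : BStr} : prefBool σ τ = true ↔ σ <+: τ := by
  constructor
  · rintro h
    rw [prefBool, Bool.and_eq_true, decide_eq_true_eq, decide_eq_true_eq] at h
    obtain ⟨hlen, heq⟩ := h
    rw [List.prefix_iff_eq_take]
    rw [← heq]
    apply List.ext_getElem
    · simp [Nat.min_eq_left hlen]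
    · intro i h1 h2
      simp only [List.getElem_map, List.getElem_range]
      rw [List.getElem_take]
      rw [List.getD_eq_getElem?_getD]
      rw [List.getElem?_eq_getElem (by simp at h2 ⊢; omega)]
      simp
  · rintro ⟨t, rfl⟩
    rw [prefBool, Bool.and_eq_true, decide_eq_true_eq, decide_eq_true_eq]
    constructor
    · simp
    · apply List.ext_getElem
      · simp
      · intro i h1 h2
        simp only [List.getElem_map, List.getElem_range, List.getD_eq_getElem?_getD]
        rw [List.getElem?_append_left (by simpa using h2), List.getElem?_eq_getElem (by simpa using h2)]
        simp

lemma prefBool_primrec : Primrec₂ prefBool := by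
  have h1 : Primrec₂ fun (σ τ : BStr) => decide (σ.length ≤ τ.length) :=
    (Primrec.nat_le.comp (Primrec.list_length.comp .fst) (Primrec.list_length.comp .snd)).decide
  have h2 : Primrec₂ fun (σ τ : BStr) => ((List.range σ.length).map fun i => τ.getD i false) :=
    Primrec.list_map (Primrec.list_range.comp (Primrec.list_length.comp .fst))
      ((Primrec.list_getD false).comp₂ (Primrec.snd.comp₂ Primrec₂.left) Primrec₂.right)
  have h3 : Primrec₂ fun (σ τ : BStr) => decide ((((List.range σ.length)).map fun i => τ.getD i false) = σ) :=
    (Primrec.eq.comp₂ h2 Primrec₂.left).decide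
  exact Primrec.and.comp₂ h1 h3

end NotThinAux

namespace NotThinAux

open Encodable

section Phi

variable (Φ : Functional Bool Bool)

/-- `Φ^β` is defined (halts) on all inputs `< i`. -/
def dfnB (β : BStr) (i : ℕ) : Bool :=
  Nat.rec true (fun x ih => ih && (Φ.φ β x).isSome) i

@[simp] lemma dfnB_zero (β : BStr) : dfnB Φ β 0 = true := rfl

@[simp] lemma dfnB_succ (β : BStr) (x : ℕ) :
    dfnB Φ β (x+1) = (dfnB Φ β x && (Φ.φ β x).isSome) := rfl

lemma dfnB_iff {β : BStr} {i : ℕ} :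
    dfnB Φ β i = true ↔ ∀ x < i, (Φ.φ β x).isSome = true := by
  induction i with
  | zero => simp
  | succ n ih =>
    rw [dfnB_succ, Bool.and_eq_true, ih]
    constructor
    · rintro ⟨h1, h2⟩ x hx
      rcases Nat.lt_succ_iff_lt_or_eq.1 hx with h | rfl
      · exact h1 x h
      · exact h2
    · intro h
      exact ⟨fun x hx => h x (Nat.lt_succ_of_lt hx), h n (Nat.lt_succ_self n)⟩

lemma dfnB_mono {β : BStr} {i j : ℕ} (hij : i ≤ j) (h : dfnB Φ β j = true) :
    dfnB Φ β i = true := by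
  rw [dfnB_iff] at h ⊢
  exact fun x hx => h x (lt_of_lt_of_le hx hij)

lemma dfnB_computable : Computable₂ (dfnB Φ) := by
  have c2 : Computable fun x : (BStr × ℕ) × (ℕ × Bool) => Φ.φ x.1.1 x.2.1 :=
    Φ.comp.comp (Computable.fst.comp Computable.fst) (Computable.fst.comp Computable.snd)
  have c3 : Computable fun x : (BStr × ℕ) × (ℕ × Bool) => (Φ.φ x.1.1 x.2.1).isSome :=
    Primrec.option_isSome.to_comp.comp c2
  have ch : Computable₂ (fun (p : BStr × ℕ) (q : ℕ × Bool) => q.2 && (Φ.φ p.1 q.1).isSome) :=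
    Primrec.and.to_comp.comp (Computable.snd.comp Computable.snd) c3
  have := Computable.nat_rec (α := BStr × ℕ) (σ := Bool)
    (f := fun p => p.2) (g := fun _ => true)
    (h := fun p q => q.2 && (Φ.φ p.1 q.1).isSome)
    Computable.snd (Computable.const true) ch
  exact this.of_eq fun p => rfl

/-- The output string of length `n` computed by `Φ` from oracle string `β`
(meaningful when `dfnB Φ β n`). -/
def outN (β : BStr) (n : ℕ) : BStr :=
  Nat.rec [] (fun x ih => ih ++ [(Φ.φ β x).iget]) n

lemma outN_eq (β : BStr) (n : ℕ) :
    outN Φ β n = (List.range n).map fun x => (Φ.φ β x).iget := by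
  induction n with
  | zero => rfl
  | succ n ih => rw [List.range_succ]; simp [outN] at ih ⊢; rw [ih]

lemma outN_computable : Computable₂ (outN Φ) := by
  have c2 : Computable fun x : (BStr × ℕ) × (ℕ × BStr) => Φ.φ x.1.1 x.2.1 :=
    Φ.comp.comp (Computable.fst.comp Computable.fst) (Computable.fst.comp Computable.snd)
  have c3 : Computable fun x : (BStr × ℕ) × (ℕ × BStr) => (Φ.φ x.1.1 x.2.1).iget :=
    Primrec.option_iget.to_comp.comp c2
  have ch : Computable₂ (fun (p : BStr × ℕ) (q : ℕ × BStr) => q.2 ++ [(Φ.φ p.1 q.1).iget]) :=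
    Primrec.list_concat.to_comp.comp (Computable.snd.comp Computable.snd) c3
  have := Computable.nat_rec (α := BStr × ℕ) (σ := BStr)
    (f := fun p => p.2) (g := fun _ => ([] : BStr))
    (h := fun p q => q.2 ++ [(Φ.φ p.1 q.1).iget])
    Computable.snd (Computable.const []) ch
  exact this.of_eq fun p => rfl

end Phi

/-- Totalized unbounded search: the value of `f a` at the least `n` where it is defined. -/
noncomputable def findVal {α σ : Type} {f : α → ℕ → Option σ}
    (hex : ∀ a, ∃ n, (f a n).isSome = true) (a : α) : σ :=
  (f a (Nat.find (hex a))).get (Nat.find_spec (hex a))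

lemma findVal_mem {α σ : Type} {f : α → ℕ → Option σ}
    (hex : ∀ a, ∃ n, (f a n).isSome = true) (a : α) :
    ∃ n, f a n = some (findVal hex a) := by
  refine ⟨Nat.find (hex a), ?_⟩
  have h := Nat.find_spec (hex a)
  rw [findVal]
  exact (Option.eq_some_of_isSome h) ▸ rfl

lemma findVal_computable {α σ : Type} [Primcodable α] [Primcodable σ]
    {f : α → ℕ → Option σ} (hf : Computable₂ f)
    (hex : ∀ a, ∃ n, (f a n).isSome = true) :
    Computable (findVal hex) := by
  apply (Partrec.rfindOpt hf).of_eq_tot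
  intro a
  rw [Nat.rfindOpt]
  refine Part.mem_bind_iff.mpr ⟨Nat.find (hex a), ?_, ?_⟩
  · refine Nat.mem_rfind.2 ?_
    constructor
    · simpa [Part.mem_coe] using Nat.find_spec (hex a)
    · intro m hm
      have := Nat.find_min (hex a) hm
      simp only [Part.coe_some, Part.mem_some_iff]
      simp only [Bool.not_eq_true] at this
      exact this.symm
  · rw [Part.mem_coe]
    exact Option.get_mem _

end NotThinAux

namespace NotThinAux

open Encodable

section Chain

variable (Φ : Functional Bool Bool) (a0 : BStr)

/-- Search matrix for one greedy step: from state `(i, β)`, test whether code `n`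
decodes to an extension `β'` of `β` on which `Φ` is defined up to `i+1`.
An escape clause (for `β` not extending `a0`) keeps the search total. -/
def SF (p : ℕ × BStr) (n : ℕ) : Option BStr :=
  cond (prefBool a0 p.2)
    (Option.casesOn (decode (α := BStr) n) none
      (fun β' => cond (prefBool p.2 β' && dfnB Φ β' (p.1+1)) (some β') none))
    (some p.2)

lemma SF_computable : Computable₂ (SF Φ a0) := by
  have hc : Computable fun x : (ℕ × BStr) × ℕ => prefBool a0 x.1.2 :=
    prefBool_primrec.to_comp.comp (Computable.const a0) (Computable.snd.comp Computable.fst)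
  have he : Computable fun x : (ℕ × BStr) × ℕ => some x.1.2 :=
    Computable.option_some.comp (Computable.snd.comp Computable.fst)
  have ho : Computable fun x : (ℕ × BStr) × ℕ => decode (α := BStr) x.2 :=
    Computable.decode.comp Computable.snd
  have hpb : Computable fun y : ((ℕ × BStr) × ℕ) × BStr => prefBool y.1.1.2 y.2 :=
    prefBool_primrec.to_comp.comp
      (Computable.snd.comp (Computable.fst.comp Computable.fst)) Computable.snd
  have hdb : Computable fun y : ((ℕ × BStr) × ℕ) × BStr => dfnB Φ y.2 (y.1.1.1+1) :=
    (dfnB_computable Φ).comp Computable.snd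
      (Primrec.succ.to_comp.comp
        (Computable.fst.comp (Computable.fst.comp Computable.fst)))
  have hg : Computable₂ fun (x : (ℕ × BStr) × ℕ) (β' : BStr) =>
      cond (prefBool x.1.2 β' && dfnB Φ β' (x.1.1+1)) (some β') none :=
    Computable.cond (Primrec.and.to_comp.comp hpb hdb)
      (Computable.option_some.comp Computable.snd) (Computable.const none)
  have ht : Computable fun x : (ℕ × BStr) × ℕ =>
      Option.casesOn (motive := fun _ => Option BStr) (decode (α := BStr) x.2) none
        (fun β' => cond (prefBool x.1.2 β' && dfnB Φ β' (x.1.1+1)) (some β') none) :=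
    Computable.option_casesOn ho (Computable.const none) hg
  exact Computable.cond hc ht he

variable {Φ a0}

lemma SF_spec {p : ℕ × BStr} {n : ℕ} {r : BStr} (h : SF Φ a0 p n = some r) :
    p.2 <+: r ∧ (a0 <+: p.2 → dfnB Φ r (p.1+1) = true) := by
  unfold SF at h
  by_cases hc : prefBool a0 p.2 = true
  · rw [hc, cond_true] at h
    cases hd : decode (α := BStr) n with
    | none => rw [hd] at h; simp at h
    | some β' =>
      rw [hd] at h
      have h' : (bif prefBool p.2 β' && dfnB Φ β' (p.1+1) then some β' else none) = some r := h
      by_cases hcc : (prefBool p.2 β' && dfnB Φ β' (p.1+1)) = true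
      · rw [hcc, cond_true, Option.some.injEq] at h'
        subst h'
        rw [Bool.and_eq_true] at hcc
        exact ⟨prefBool_iff.1 hcc.1, fun _ => hcc.2⟩
      · rw [Bool.not_eq_true] at hcc
        rw [hcc, cond_false] at h'
        simp at h'
  · rw [Bool.not_eq_true] at hc
    rw [hc, cond_false, Option.some.injEq] at h
    subst h
    refine ⟨List.prefix_refl _, fun hp => ?_⟩
    rw [← prefBool_iff] at hp
    rw [hp] at hc
    simp at hc

section WithHex

variable (hex : ∀ p : ℕ × BStr, ∃ n, (SF Φ a0 p n).isSome = true)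

/-- The greedy chain of oracle strings starting from seed `σ`. -/
noncomputable def chainF (σ : BStr) (i : ℕ) : BStr :=
  Nat.rec σ (fun x ih => findVal hex (x, ih)) i

@[simp] lemma chainF_zero (σ : BStr) : chainF hex σ 0 = σ := rfl

lemma chainF_succ (σ : BStr) (i : ℕ) :
    chainF hex σ (i+1) = findVal hex (i, chainF hex σ i) := rfl

lemma step_pref (x : ℕ) (β : BStr) : β <+: findVal hex (x, β) := by
  obtain ⟨n, hn⟩ := findVal_mem hex (x, β)
  exact (SF_spec hn).1

lemma step_dfn {x : ℕ} {β : BStr} (hβ : a0 <+: β) :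
    dfnB Φ (findVal hex (x, β)) (x+1) = true := by
  obtain ⟨n, hn⟩ := findVal_mem hex (x, β)
  exact (SF_spec hn).2 hβ

lemma chainF_pref {σ : BStr} {i j : ℕ} (hij : i ≤ j) :
    chainF hex σ i <+: chainF hex σ j := by
  induction j, hij using Nat.le_induction with
  | base => exact List.prefix_refl _
  | succ n _ ih => exact ih.trans (by rw [chainF_succ]; exact step_pref hex n _)

lemma chainF_seed (σ : BStr) (i : ℕ) : σ <+: chainF hex σ i :=
  chainF_pref hex (Nat.zero_le i)

lemma chainF_a0 {σ : BStr} (hσ : a0 <+: σ) (i : ℕ) : a0 <+: chainF hex σ i :=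
  hσ.trans (chainF_seed hex σ i)

lemma chainF_dfn {σ : BStr} (hσ : a0 <+: σ) (i : ℕ) :
    dfnB Φ (chainF hex σ (i+1)) (i+1) = true := by
  rw [chainF_succ]
  exact step_dfn hex (chainF_a0 hex hσ i)

/-- The limit path computed along the greedy chain from seed `σ`. -/
noncomputable def pathOfF (σ : BStr) : ℕ → Bool :=
  fun x => (Φ.φ (chainF hex σ (x+1)) x).iget

lemma pathOf_val {σ : BStr} (hσ : a0 <+: σ) (x : ℕ) :
    Φ.φ (chainF hex σ (x+1)) x = some (pathOfF hex σ x) := by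
  have hd := chainF_dfn hex hσ x
  rw [dfnB_iff] at hd
  obtain ⟨b, hb⟩ := Option.isSome_iff_exists.1 (hd x (Nat.lt_succ_self x))
  rw [pathOfF, hb]

lemma pathOf_val_ge {σ : BStr} (hσ : a0 <+: σ) {x i : ℕ} (hxi : x < i) :
    Φ.φ (chainF hex σ i) x = some (pathOfF hex σ x) :=
  Φ.mono (chainF_pref hex hxi) (pathOf_val hex hσ x)

lemma pathOf_seg {σ : BStr} (hσ : a0 <+: σ) (k : ℕ) :
    seg (pathOfF hex σ) k = outN Φ (chainF hex σ (k+1)) k := by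
  rw [outN_eq, seg]
  apply List.map_congr_left
  intro x hx
  rw [List.mem_range] at hx
  rw [pathOf_val_ge hex hσ (Nat.lt_succ_of_lt hx)]

lemma pathOf_seed_val {σ : BStr} (hσ : a0 <+: σ) {x : ℕ} {b : Bool}
    (h : Φ.φ σ x = some b) : pathOfF hex σ x = b := by
  have h2 : Φ.φ (chainF hex σ (x+1)) x = some b := Φ.mono (chainF_seed hex σ (x+1)) h
  have h3 := pathOf_val hex hσ x
  rw [h2] at h3
  exact (Option.some.injEq _ _ ▸ h3).symm

lemma chainF_computable (σ0 : BStr) : Computable (chainF hex σ0) := by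
  have hh : Computable₂ fun (_ : ℕ) (q : ℕ × BStr) => findVal hex q :=
    (findVal_computable (SF_computable Φ a0) hex).comp Computable.snd
  have := Computable.nat_rec (α := ℕ) (σ := BStr)
    (f := fun i => i) (g := fun _ => σ0)
    (h := fun _ q => findVal hex q)
    Computable.id (Computable.const σ0) hh
  exact this.of_eq fun i => rfl

end WithHex

end Chain

end NotThinAux

namespace NotThinAux

open Encodable

theorem main_construction (T : Set BStr) (hTree : IsTree T)
    (fT : BStr → Bool) (hfT : Computable fT) (hfTiff : ∀ σ, σ ∈ T ↔ fT σ = true)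
    (Φ : Functional Bool Bool) (a0 : BStr)
    (H1 : ∀ τ, a0 <+: τ → ∀ m, ∃ β, τ <+: β ∧ dfnB Φ β m = true)
    (H2 : ∀ τ, a0 <+: τ → ∀ n, dfnB Φ τ n = true → outN Φ τ n ∈ T)
    (H3 : ∀ τ, a0 <+: τ → ∃ β₁ β₂ x b₁ b₂, τ <+: β₁ ∧ τ <+: β₂ ∧
          Φ.φ β₁ x = some b₁ ∧ Φ.φ β₂ x = some b₂ ∧ b₁ ≠ b₂) :
    ∃ S : Set BStr, S ⊆ T ∧ RecTree S ∧
      ∀ N : Set (ℕ → Bool), ClopenC N → paths S ≠ paths T ∩ N := by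
  have ha0 : a0 <+: a0 := List.prefix_refl a0
  -- totality of the one-step search
  have hex : ∀ p : ℕ × BStr, ∃ n, (SF Φ a0 p n).isSome = true := by
    intro p
    by_cases hc : prefBool a0 p.2 = true
    · obtain ⟨β, hβ1, hβ2⟩ := H1 p.2 (prefBool_iff.1 hc) (p.1+1)
      refine ⟨encode β, ?_⟩
      unfold SF
      rw [hc, cond_true, encodek]
      have hcc : (prefBool p.2 β && dfnB Φ β (p.1+1)) = true := by
        rw [Bool.and_eq_true]; exact ⟨prefBool_iff.2 hβ1, hβ2⟩
      show (cond (prefBool p.2 β && dfnB Φ β (p.1+1)) (some β) none).isSome = true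
      rw [hcc, cond_true]
      rfl
    · refine ⟨0, ?_⟩
      unfold SF
      rw [Bool.not_eq_true] at hc
      rw [hc, cond_false]
      rfl
  -- membership of greedy paths in [T]
  have hpT : ∀ σ : BStr, a0 <+: σ → pathOfF hex σ ∈ paths T := by
    intro σ hσ k
    rw [pathOf_seg hex hσ k]
    exact H2 _ (chainF_a0 hex hσ (k+1)) k (dfnB_mono Φ (Nat.le_succ k) (chainF_dfn hex hσ k))
  have hZT : pathOfF hex a0 ∈ paths T := hpT a0 ha0
  -- non-isolation of the distinguished computable path
  have hni : ∀ M, ∃ Y, Y ∈ paths T ∧ Y ≠ pathOfF hex a0 ∧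
      seg Y M = seg (pathOfF hex a0) M := by
    intro M
    have hτ : a0 <+: chainF hex a0 (M+1) := chainF_a0 hex ha0 (M+1)
    obtain ⟨β₁, β₂, x, b₁, b₂, hp1, hp2, hv1, hv2, hne⟩ := H3 (chainF hex a0 (M+1)) hτ
    obtain ⟨β, b, hpβ, hvβ, hbZ⟩ :
        ∃ β b, chainF hex a0 (M+1) <+: β ∧ Φ.φ β x = some b ∧ b ≠ pathOfF hex a0 x := by
      by_cases hb : b₁ = pathOfF hex a0 x
      · exact ⟨β₂, b₂, hp2, hv2, by rw [← hb]; exact fun h => hne h.symm⟩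
      · exact ⟨β₁, b₁, hp1, hv1, hb⟩
    have ha0β : a0 <+: β := hτ.trans hpβ
    refine ⟨pathOfF hex β, hpT β ha0β, ?_, ?_⟩
    · intro hEq
      have hvb := pathOf_seed_val hex ha0β hvβ
      rw [hEq] at hvb
      exact hbZ hvb.symm
    · rw [seg, seg]
      apply List.map_congr_left
      intro y hy
      rw [List.mem_range] at hy
      have h1 : Φ.φ (chainF hex a0 (M+1)) y = some (pathOfF hex a0 y) :=
        pathOf_val_ge hex ha0 (Nat.lt_succ_of_lt hy)
      have h2 : Φ.φ β y = some (pathOfF hex a0 y) := Φ.mono hpβ h1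
      exact pathOf_seed_val hex ha0β h2
  -- the subtree: prefixes of the distinguished path
  refine ⟨{τ : BStr | τ = seg (pathOfF hex a0) τ.length}, ?_, ⟨?_, ?_⟩, ?_⟩
  · intro τ hτ
    rw [Set.mem_setOf_eq] at hτ
    rw [hτ]
    exact hZT τ.length
  · intro σ τ hpre hτ
    rw [Set.mem_setOf_eq] at hτ ⊢
    rw [hτ] at hpre
    exact prefix_seg hpre
  · -- recursive characteristic function
    refine ⟨fun τ => decide (τ = outN Φ (chainF hex a0 (τ.length+1)) τ.length), ?_, ?_⟩
    · have hlen : Computable fun τ : BStr => τ.length := Primrec.list_length.to_comp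
      have hch : Computable fun τ : BStr => chainF hex a0 (τ.length+1) :=
        (chainF_computable hex a0).comp (Primrec.succ.to_comp.comp hlen)
      have hout : Computable fun τ : BStr => outN Φ (chainF hex a0 (τ.length+1)) τ.length :=
        (outN_computable Φ).comp hch hlen
      exact Primrec.eq.decide.to_comp.comp Computable.id hout
    · intro σ
      rw [Set.mem_setOf_eq, decide_eq_true_eq, pathOf_seg hex ha0]
  · -- no clopen set matches
    rintro N ⟨F, hF⟩ heq
    have hZS : pathOfF hex a0 ∈ paths {τ : BStr | τ = seg (pathOfF hex a0) τ.length} := by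
      intro k
      rw [Set.mem_setOf_eq, seg_length]
    have hZN : pathOfF hex a0 ∈ N := by
      have := hZS
      rw [heq] at this
      exact this.2
    rw [hF, Set.mem_setOf_eq] at hZN
    obtain ⟨σf, hσF, hσseg⟩ := hZN
    obtain ⟨Y, hYT, hYne, hYseg⟩ := hni σf.length
    have hYN : Y ∈ N := by
      rw [hF, Set.mem_setOf_eq]
      exact ⟨σf, hσF, by rw [hYseg, hσseg]⟩
    have hYS : Y ∈ paths {τ : BStr | τ = seg (pathOfF hex a0) τ.length} := by
      rw [heq]
      exact ⟨hYT, hYN⟩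
    apply hYne
    funext x
    have hk := hYS (x+1)
    rw [Set.mem_setOf_eq, seg_length] at hk
    exact seg_ext hk

end NotThinAux

namespace NotThinAux

open Encodable

section Generic

variable {A B : ℕ → Bool} {Φ : Functional Bool Bool}

lemma seg_val (hTot : FunApplies Φ A B) {k x : ℕ} {b : Bool}
    (h : Φ.φ (seg A k) x = some b) : b = B x := by
  obtain ⟨k', hk'⟩ := hTot x
  rcases le_total k k' with hkk | hkk
  · exact Option.some.inj ((Φ.mono (seg_prefix A hkk) h).symm.trans hk')
  · exact Option.some.inj (h.symm.trans (Φ.mono (seg_prefix A hkk) hk'))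

lemma dfnB_lift {σ τ : BStr} {m : ℕ} (hpre : σ <+: τ)
    (h : dfnB Φ σ m = true) : dfnB Φ τ m = true := by
  rw [dfnB_iff] at h ⊢
  intro x hx
  obtain ⟨b, hb⟩ := Option.isSome_iff_exists.1 (h x hx)
  rw [Φ.mono hpre hb]
  rfl

lemma seg_dfn (hTot : FunApplies Φ A B) (m : ℕ) :
    ∃ k, dfnB Φ (seg A k) m = true := by
  induction m with
  | zero => exact ⟨0, rfl⟩
  | succ n ih =>
    obtain ⟨k, hk⟩ := ih
    obtain ⟨k', hk'⟩ := hTot n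
    refine ⟨max k k', ?_⟩
    rw [dfnB_iff]
    intro x hx
    rcases Nat.lt_succ_iff_lt_or_eq.1 hx with h | rfl
    · rw [dfnB_iff] at hk
      obtain ⟨b, hb⟩ := Option.isSome_iff_exists.1 (hk x h)
      rw [Φ.mono (seg_prefix A (le_max_left k k')) hb]
      rfl
    · rw [Φ.mono (seg_prefix A (le_max_right k k')) hk']
      rfl

lemma outN_seg (hTot : FunApplies Φ A B) {k n : ℕ} (h : dfnB Φ (seg A k) n = true) :
    outN Φ (seg A k) n = seg B n := by
  rw [outN_eq]
  show _ = (List.range n).map B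
  apply List.map_congr_left
  intro x hx
  rw [List.mem_range] at hx
  rw [dfnB_iff] at h
  obtain ⟨b, hb⟩ := Option.isSome_iff_exists.1 (h x hx)
  rw [hb]
  exact seg_val hTot hb

/-- Forcing totality structure above a prefix of `A`. -/
lemma gen1 (hA : TwoGeneric A) (hTot : FunApplies Φ A B) :
    ∃ k0, ∀ τ, seg A k0 <+: τ → ∀ m, ∃ β, τ <+: β ∧ dfnB Φ β m = true := by
  have hSig : Sigma02 {α : BStr | ∃ m, ∀ β, α <+: β → ¬ dfnB Φ β m = true} := by
    refine ⟨fun σ q => Option.casesOn (motive := fun _ => Bool) (decode (α := BStr) q.2) true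
      (fun β => !(prefBool σ β && dfnB Φ β q.1)), ?_, ?_⟩
    · have ho : Computable fun x : BStr × (ℕ × ℕ) => decode (α := BStr) x.2.2 :=
        Computable.decode.comp (Computable.snd.comp Computable.snd)
      have hpb : Computable fun y : (BStr × (ℕ × ℕ)) × BStr => prefBool y.1.1 y.2 :=
        prefBool_primrec.to_comp.comp (Computable.fst.comp Computable.fst) Computable.snd
      have hdb : Computable fun y : (BStr × (ℕ × ℕ)) × BStr => dfnB Φ y.2 y.1.2.1 :=
        (dfnB_computable Φ).comp Computable.snd
          (Computable.fst.comp (Computable.snd.comp Computable.fst))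
      have hg : Computable₂ fun (x : BStr × (ℕ × ℕ)) (β : BStr) =>
          !(prefBool x.1 β && dfnB Φ β x.2.1) :=
        Primrec.not.to_comp.comp (Primrec.and.to_comp.comp hpb hdb)
      exact Computable.option_casesOn ho (Computable.const true) hg
    · intro σ
      rw [Set.mem_setOf_eq]
      constructor
      · rintro ⟨m, hm⟩
        refine ⟨m, fun n => ?_⟩
        cases hd : decode (α := BStr) n with
        | none => simp only [hd]
        | some β =>
          simp only [hd]
          show (!(prefBool σ β && dfnB Φ β m)) = true
          by_cases hp : prefBool σ β = true
          · have := hm β (prefBool_iff.1 hp)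
            rw [Bool.not_eq_true] at this
            simp [hp, this]
          · rw [Bool.not_eq_true] at hp
            simp [hp]
      · rintro ⟨m, hm⟩
        refine ⟨m, fun β hβ hdfn => ?_⟩
        have h0 := hm (encode β)
        simp only [encodek] at h0
        have h1 : (!(prefBool σ β && dfnB Φ β m)) = true := h0
        simp [prefBool_iff.2 hβ, hdfn] at h1
  rcases hA _ hSig with hM | hAv
  · exfalso
    obtain ⟨k, hm⟩ := hM
    rw [Set.mem_setOf_eq] at hm
    obtain ⟨m, hm⟩ := hm
    obtain ⟨k', hk'⟩ := seg_dfn hTot m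
    exact hm (seg A (max k k')) (seg_prefix A (le_max_left k k'))
      (dfnB_lift (seg_prefix A (le_max_right k k')) hk')
  · obtain ⟨k0, hk0⟩ := hAv
    refine ⟨k0, fun τ hτ m => ?_⟩
    have := hk0 τ hτ
    rw [Set.mem_setOf_eq] at this
    push_neg at this
    exact this m

/-- Forcing outputs into `T` above a prefix of `A`. -/
lemma gen2 {T : Set BStr} (hA : TwoGeneric A) (hTot : FunApplies Φ A B)
    (hBP : B ∈ paths T) (fT : BStr → Bool) (hfT : Computable fT)
    (hfTiff : ∀ σ, σ ∈ T ↔ fT σ = true) :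
    ∃ k1, ∀ τ, seg A k1 <+: τ → ∀ n, dfnB Φ τ n = true → outN Φ τ n ∈ T := by
  have hSig : Sigma02 {α : BStr | ∃ n, dfnB Φ α n = true ∧ outN Φ α n ∉ T} := by
    refine ⟨fun σ q => dfnB Φ σ q.1 && !(fT (outN Φ σ q.1)), ?_, ?_⟩
    · have hd : Computable fun x : BStr × (ℕ × ℕ) => dfnB Φ x.1 x.2.1 :=
        (dfnB_computable Φ).comp Computable.fst (Computable.fst.comp Computable.snd)
      have hout : Computable fun x : BStr × (ℕ × ℕ) => outN Φ x.1 x.2.1 :=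
        (outN_computable Φ).comp Computable.fst (Computable.fst.comp Computable.snd)
      have hfo : Computable fun x : BStr × (ℕ × ℕ) => !(fT (outN Φ x.1 x.2.1)) :=
        Primrec.not.to_comp.comp (hfT.comp hout)
      exact Primrec.and.to_comp.comp hd hfo
    · intro σ
      rw [Set.mem_setOf_eq]
      constructor
      · rintro ⟨n, hn1, hn2⟩
        refine ⟨n, fun _ => ?_⟩
        rw [hfTiff] at hn2
        rw [Bool.not_eq_true] at hn2
        simp [hn1, hn2]
      · rintro ⟨m, hm⟩
        have h0 := hm 0
        have h1 : (dfnB Φ σ m && !(fT (outN Φ σ m))) = true := h0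
        rw [Bool.and_eq_true] at h1
        refine ⟨m, h1.1, ?_⟩
        rw [hfTiff]
        intro hcontra
        rw [hcontra] at h1
        exact absurd h1.2 (by simp)
  rcases hA _ hSig with hM | hAv
  · exfalso
    obtain ⟨k, hm⟩ := hM
    rw [Set.mem_setOf_eq] at hm
    obtain ⟨n, hn1, hn2⟩ := hm
    rw [outN_seg hTot hn1] at hn2
    exact hn2 (hBP n)
  · obtain ⟨k1, hk1⟩ := hAv
    refine ⟨k1, fun τ hτ n hn => ?_⟩
    have := hk1 τ hτ
    rw [Set.mem_setOf_eq] at this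
    push_neg at this
    exact this n hn

/-- Forcing splittings to be dense above a prefix of `A` (using nonrecursiveness of `B`). -/
lemma gen3 (hA : TwoGeneric A) (hTot : FunApplies Φ A B) (hNR : ¬ Computable B) :
    ∃ k2, ∀ τ, seg A k2 <+: τ → ∃ β₁ β₂ x b₁ b₂, τ <+: β₁ ∧ τ <+: β₂ ∧
      Φ.φ β₁ x = some b₁ ∧ Φ.φ β₂ x = some b₂ ∧ b₁ ≠ b₂ := by
  have hSig : Sigma02 {α : BStr | ∀ β₁ β₂ x b₁ b₂, α <+: β₁ → α <+: β₂ →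
      Φ.φ β₁ x = some b₁ → Φ.φ β₂ x = some b₂ → b₁ = b₂} := by
    classical
    refine ⟨fun σ q => Option.casesOn (motive := fun _ => Bool)
        (decode (α := (BStr × BStr) × ℕ) q.2) true
        (fun w => !(prefBool σ w.1.1 && prefBool σ w.1.2) ||
          (Option.casesOn (motive := fun _ => Bool) (Φ.φ w.1.1 w.2) true (fun b₁ =>
            Option.casesOn (motive := fun _ => Bool) (Φ.φ w.1.2 w.2) true
              (fun b₂ => decide (b₁ = b₂))))), ?_, ?_⟩
    · have ho : Computable fun x : BStr × (ℕ × ℕ) => decode (α := (BStr × BStr) × ℕ) x.2.2 :=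
        Computable.decode.comp (Computable.snd.comp Computable.snd)
      have hnp : Computable fun y : (BStr × (ℕ × ℕ)) × ((BStr × BStr) × ℕ) =>
          !(prefBool y.1.1 y.2.1.1 && prefBool y.1.1 y.2.1.2) :=
        Primrec.not.to_comp.comp (Primrec.and.to_comp.comp
          (prefBool_primrec.to_comp.comp (Computable.fst.comp Computable.fst)
            (Computable.fst.comp (Computable.fst.comp Computable.snd)))
          (prefBool_primrec.to_comp.comp (Computable.fst.comp Computable.fst)
            (Computable.snd.comp (Computable.fst.comp Computable.snd))))
      have hφ1 : Computable fun y : (BStr × (ℕ × ℕ)) × ((BStr × BStr) × ℕ) =>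
          Φ.φ y.2.1.1 y.2.2 :=
        Φ.comp.comp (Computable.fst.comp (Computable.fst.comp Computable.snd))
          (Computable.snd.comp Computable.snd)
      have hφ2 : Computable fun y : ((BStr × (ℕ × ℕ)) × ((BStr × BStr) × ℕ)) × Bool =>
          Φ.φ y.1.2.1.2 y.1.2.2 :=
        Φ.comp.comp
          (Computable.snd.comp (Computable.fst.comp (Computable.snd.comp Computable.fst)))
          (Computable.snd.comp (Computable.snd.comp Computable.fst))
      have hinner2 : Computable₂ fun (y : (BStr × (ℕ × ℕ)) × ((BStr × BStr) × ℕ)) (b₁ : Bool) =>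
          Option.casesOn (motive := fun _ => Bool) (Φ.φ y.2.1.2 y.2.2) true
            (fun b₂ => decide (b₁ = b₂)) :=
        Computable.option_casesOn hφ2 (Computable.const true)
          ((Primrec.eq.decide.to_comp).comp (Computable.snd.comp Computable.fst) Computable.snd)
      have hinner : Computable fun y : (BStr × (ℕ × ℕ)) × ((BStr × BStr) × ℕ) =>
          Option.casesOn (motive := fun _ => Bool) (Φ.φ y.2.1.1 y.2.2) true (fun b₁ =>
            Option.casesOn (motive := fun _ => Bool) (Φ.φ y.2.1.2 y.2.2) true
              (fun b₂ => decide (b₁ = b₂))) :=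
        Computable.option_casesOn hφ1 (Computable.const true) hinner2
      have hg : Computable₂ fun (x : BStr × (ℕ × ℕ)) (w : (BStr × BStr) × ℕ) =>
          !(prefBool x.1 w.1.1 && prefBool x.1 w.1.2) ||
          (Option.casesOn (motive := fun _ => Bool) (Φ.φ w.1.1 w.2) true (fun b₁ =>
            Option.casesOn (motive := fun _ => Bool) (Φ.φ w.1.2 w.2) true
              (fun b₂ => decide (b₁ = b₂)))) :=
        Primrec.or.to_comp.comp hnp hinner
      exact Computable.option_casesOn ho (Computable.const true) hg
    · intro σ
      rw [Set.mem_setOf_eq]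
      constructor
      · intro hσ
        refine ⟨0, fun n => ?_⟩
        cases hd : decode (α := (BStr × BStr) × ℕ) n with
        | none => simp only [hd]
        | some w =>
          simp only [hd]
          show (!(prefBool σ w.1.1 && prefBool σ w.1.2) ||
            (Option.casesOn (motive := fun _ => Bool) (Φ.φ w.1.1 w.2) true (fun b₁ =>
              Option.casesOn (motive := fun _ => Bool) (Φ.φ w.1.2 w.2) true
                (fun b₂ => decide (b₁ = b₂))))) = true
          by_cases hp : (prefBool σ w.1.1 && prefBool σ w.1.2) = true
          · rw [Bool.or_eq_true]
            right
            rw [Bool.and_eq_true] at hp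
            cases hv1 : Φ.φ w.1.1 w.2 with
            | none => rfl
            | some b₁ =>
              cases hv2 : Φ.φ w.1.2 w.2 with
              | none => rfl
              | some b₂ =>
                show decide (b₁ = b₂) = true
                rw [decide_eq_true_eq]
                exact hσ w.1.1 w.1.2 w.2 b₁ b₂ (prefBool_iff.1 hp.1) (prefBool_iff.1 hp.2) hv1 hv2
          · rw [Bool.not_eq_true] at hp
            simp [hp]
      · rintro ⟨m, hm⟩
        intro β₁ β₂ x b₁ b₂ h1 h2 h3 h4
        have h0 := hm (encode ((β₁, β₂), x))
        simp only [encodek] at h0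
        have h5 : (!(prefBool σ β₁ && prefBool σ β₂) ||
          (Option.casesOn (motive := fun _ => Bool) (Φ.φ β₁ x) true (fun b₁ =>
            Option.casesOn (motive := fun _ => Bool) (Φ.φ β₂ x) true
              (fun b₂ => decide (b₁ = b₂))))) = true := h0
        rw [h3, h4] at h5
        simp [prefBool_iff.2 h1, prefBool_iff.2 h2] at h5
        exact h5
  rcases hA _ hSig with hM | hAv
  · exfalso
    apply hNR
    obtain ⟨k, hm⟩ := hM
    rw [Set.mem_setOf_eq] at hm
    have hexG : ∀ x : ℕ, ∃ n, ((fun (x n : ℕ) =>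
        Option.casesOn (motive := fun _ => Option Bool) (decode (α := BStr) n) none
          (fun β => cond (prefBool (seg A k) β) (Φ.φ β x) none)) x n).isSome = true := by
      intro x
      obtain ⟨k', hk'⟩ := hTot x
      refine ⟨encode (seg A (max k k')), ?_⟩
      simp only [encodek]
      show (cond (prefBool (seg A k) (seg A (max k k')))
        (Φ.φ (seg A (max k k')) x) none).isSome = true
      rw [prefBool_iff.2 (seg_prefix A (le_max_left k k')), cond_true,
        Φ.mono (seg_prefix A (le_max_right k k')) hk']
      rfl
    have hGcomp : Computable₂ (fun (x n : ℕ) =>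
        Option.casesOn (motive := fun _ => Option Bool) (decode (α := BStr) n) none
          (fun β => cond (prefBool (seg A k) β) (Φ.φ β x) none)) := by
      have ho : Computable fun x : ℕ × ℕ => decode (α := BStr) x.2 :=
        Computable.decode.comp Computable.snd
      have hcnd : Computable fun y : (ℕ × ℕ) × BStr => prefBool (seg A k) y.2 :=
        prefBool_primrec.to_comp.comp (Computable.const (seg A k)) Computable.snd
      have hφ : Computable fun y : (ℕ × ℕ) × BStr => Φ.φ y.2 y.1.1 :=
        Φ.comp.comp Computable.snd (Computable.fst.comp Computable.fst)
      have hg : Computable₂ fun (x : ℕ × ℕ) (β : BStr) =>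
          cond (prefBool (seg A k) β) (Φ.φ β x.1) none :=
        Computable.cond hcnd hφ (Computable.const none)
      exact Computable.option_casesOn ho (Computable.const none) hg
    have hBeq : findVal hexG = B := by
      funext x
      obtain ⟨n, hn⟩ := findVal_mem hexG x
      cases hd : decode (α := BStr) n with
      | none =>
        simp only [hd] at hn
        exact absurd (show (none : Option Bool) = some (findVal hexG x) from hn) (by simp)
      | some β =>
        simp only [hd] at hn
        have hn' : cond (prefBool (seg A k) β) (Φ.φ β x) none = some (findVal hexG x) := hn
        by_cases hp : prefBool (seg A k) β = true
        · rw [hp, cond_true] at hn'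
          obtain ⟨k', hk'⟩ := hTot x
          exact hm β (seg A (max k k')) x (findVal hexG x) (B x) (prefBool_iff.1 hp)
            (seg_prefix A (le_max_left k k')) hn'
            (Φ.mono (seg_prefix A (le_max_right k k')) hk')
        · rw [Bool.not_eq_true] at hp
          rw [hp, cond_false] at hn'
          exact absurd hn' (by simp)
    rw [← hBeq]
    exact findVal_computable hGcomp hexG
  · obtain ⟨k2, hk2⟩ := hAv
    refine ⟨k2, fun τ hτ => ?_⟩
    have := hk2 τ hτ
    rw [Set.mem_setOf_eq] at this
    push_neg at this
    exact this

end Generic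

end NotThinAux

/-- if a Π⁰₁ class `[T]` contains a total nonrecursive `B = Φ^A` for a
2-generic `A`, then `[T]` is not thin: some recursive subtree `S` of `T` has
`[S] ≠ [T] ∩ N` for every clopen `N`. -/
theorem pi01_class_with_generic_image_not_thin (T : Set BStr) (hT : RecTree T)
    (A B : ℕ → Bool) (Φ : Functional Bool Bool) (hA : TwoGeneric A)
    (hTot : FunApplies Φ A B) (hNR : ¬ Computable B) (hBP : B ∈ paths T) :
    ∃ S : Set BStr, S ⊆ T ∧ RecTree S ∧
      ∀ N : Set (ℕ → Bool), ClopenC N → paths S ≠ paths T ∩ N := by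
  obtain ⟨hTree, fT, hfT, hfTiff⟩ := hT
  obtain ⟨k0, h1⟩ := NotThinAux.gen1 hA hTot
  obtain ⟨k1, h2⟩ := NotThinAux.gen2 hA hTot hBP fT hfT hfTiff
  obtain ⟨k2, h3⟩ := NotThinAux.gen3 hA hTot hNR
  refine NotThinAux.main_construction T hTree fT hfT hfTiff Φ (seg A (max k0 (max k1 k2))) ?_ ?_ ?_
  · intro τ hτ
    exact h1 τ ((NotThinAux.seg_prefix A (le_max_left _ _)).trans hτ)
  · intro τ hτ
    exact h2 τ ((NotThinAux.seg_prefix A ((le_max_left k1 k2).trans (le_max_right k0 _))).trans hτ)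
  · intro τ hτ
    exact h3 τ ((NotThinAux.seg_prefix A ((le_max_right k1 k2).trans (le_max_right k0 _))).trans hτ)
end

section
/- Every 1-generic set A with A <_T 0′ has a Σ₁-correct recursive approximation: there is a uniformly computable sequence of binary strings (σ_s) converging to A (in the sense of the limit lemma) such that for every infinite r.e. set S ⊆ ℕ there exists s ∈ S with σ_s an initial segment of A. -/
/- ### auxiliary lemmas -/


lemma seg_length {α : Type} (A : ℕ → α) (k : ℕ) : (seg A k).length = k := by simp [seg]

lemma seg_take {α : Type} (A : ℕ → α) {n k : ℕ} (h : n ≤ k) :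
    (seg A k).take n = seg A n := by
  simp [seg, ← List.map_take, List.take_range, Nat.min_eq_left h]

lemma seg_prefix {α : Type} (A : ℕ → α) {n k : ℕ} (h : n ≤ k) :
    seg A n <+: seg A k := by
  rw [← seg_take A h]; exact List.take_prefix _ _

/-- Stage-`s` approximation to `K`. -/
def Ks (s n : ℕ) : Bool :=
  (Nat.Partrec.Code.evaln s (Denumerable.ofNat Nat.Partrec.Code n) n).isSome

lemma Ks_primrec : Primrec₂ Ks := by
  have h := Nat.Partrec.Code.primrec_evaln
  exact Primrec.option_isSome.comp
    (h.comp <| ((Primrec.fst.pair ((Primrec.ofNat _).comp Primrec.snd)).pair Primrec.snd))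

lemma Ks_stab (n : ℕ) : ∃ s0, ∀ s ≥ s0, Ks s n = K n := by
  classical
  by_cases h : (Nat.Partrec.Code.eval (Denumerable.ofNat Nat.Partrec.Code n) n).Dom
  · obtain ⟨x, hx⟩ := Part.dom_iff_mem.1 h
    obtain ⟨k, hk⟩ := Nat.Partrec.Code.evaln_complete.1 hx
    refine ⟨k, fun s hs => ?_⟩
    have := Nat.Partrec.Code.evaln_mono hs hk
    simp [Ks, K, h, Option.isSome_iff_exists]
    exact ⟨x, this⟩
  · refine ⟨0, fun s _ => ?_⟩
    have : Nat.Partrec.Code.evaln s (Denumerable.ofNat Nat.Partrec.Code n) n = Option.none := by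
      cases hE : Nat.Partrec.Code.evaln s (Denumerable.ofNat Nat.Partrec.Code n) n with
      | none => rfl
      | some x => exact absurd (Part.dom_iff_mem.2 ⟨x, Nat.Partrec.Code.evaln_sound hE⟩) h
    simp [Ks, K, h, this]

/-- finitely many points stabilize simultaneously -/
lemma stab_fin {α : Type} {g : ℕ → ℕ → α} {A : ℕ → α}
    (h : ∀ x, ∃ s0, ∀ s ≥ s0, g s x = A x) (n : ℕ) :
    ∃ s0, ∀ s ≥ s0, ∀ x < n, g s x = A x := by
  induction n with
  | zero => exact ⟨0, fun s _ x hx => by omega⟩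
  | succ n ih =>
      obtain ⟨s1, hs1⟩ := ih
      obtain ⟨s2, hs2⟩ := h n
      refine ⟨max s1 s2, fun s hs x hx => ?_⟩
      rcases Nat.lt_succ_iff_lt_or_eq.1 hx with h' | h'
      · exact hs1 s (le_trans (le_max_left _ _) hs) x h'
      · subst h'; exact hs2 s (le_trans (le_max_right _ _) hs)

lemma seg_stab {α : Type} {g : ℕ → ℕ → α} {A : ℕ → α}
    (h : ∀ x, ∃ s0, ∀ s ≥ s0, g s x = A x) (n : ℕ) :
    ∃ s0, ∀ s ≥ s0, seg (g s) n = seg A n := by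
  obtain ⟨s0, hs0⟩ := stab_fin h n
  refine ⟨s0, fun s hs => ?_⟩
  simp only [seg]
  exact List.map_congr_left fun x hx => hs0 s hs x (List.mem_range.1 hx)

/-- every 1-generic set `A <_T 0′` has a Σ₁-correct recursive
approximation. -/
theorem one_generic_sigma1_correct_approx (A : ℕ → Bool) (hA : OneGeneric A)
    (hle : TuringLE A K) (hlt : ¬ TuringLE K A) :
    ∃ σs : ℕ → BStr, RecApprox σs A ∧ SigmaOneCorrect σs A := by
  classical
  obtain ⟨Φ, hΦ⟩ := hle
  -- stage-s approximation to A
  set g : ℕ → ℕ → Bool := fun s x => (Φ.φ (seg (Ks s) s) x).getD false with hg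
  -- computability of g
  have hsegKs : Primrec fun s => seg (Ks s) s := by
    have : Primrec fun s => (List.range s).map (Ks s) :=
      Primrec.list_map (Primrec.list_range.comp Primrec.id) Ks_primrec
    exact this
  have hgc : Computable₂ g := by
    have h1 : Computable fun p : ℕ × ℕ => Φ.φ (seg (Ks p.1) p.1) p.2 :=
      Φ.comp.comp (hsegKs.to_comp.comp Computable.fst) Computable.snd
    exact Computable.option_getD h1 (Computable.const false)
  -- g converges to A pointwise
  have hgA : ∀ x, ∃ s0, ∀ s ≥ s0, g s x = A x := by
    intro x
    obtain ⟨k, hk⟩ := hΦ x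
    obtain ⟨s1, hs1⟩ := seg_stab Ks_stab k
    refine ⟨max s1 k, fun s hs => ?_⟩
    have h1 : seg (Ks s) k = seg K k := hs1 s (le_trans (le_max_left _ _) hs)
    have h2 : seg (Ks s) k <+: seg (Ks s) s :=
      seg_prefix _ (le_trans (le_max_right _ _) hs)
    have h3 : Φ.φ (seg (Ks s) s) x = some (A x) := Φ.mono h2 (by rw [h1]; exact hk)
    simp [hg, h3]
  -- computability of σs
  have hσc : Computable fun s => seg (g s) s := by
    have hstep : Computable₂ fun (s : ℕ) (p : ℕ × BStr) => p.2 ++ [g s p.1] :=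
      Primrec.list_concat.to_comp.comp₂
        ((Computable.snd.comp Computable.snd).to₂)
        (hgc.comp₂ (Computable.fst.to₂) ((Computable.fst.comp Computable.snd).to₂))
    have : Computable fun s =>
        Nat.rec (motive := fun _ => BStr) [] (fun y IH => IH ++ [g s y]) s :=
      Computable.nat_rec Computable.id (Computable.const []) hstep
    exact this.of_eq fun s => by
      have key : ∀ n, Nat.rec (motive := fun _ => BStr) [] (fun y IH => IH ++ [g s y]) n
          = seg (g s) n := by
        intro n
        induction n with
        | zero => simp [seg]
        | succ n ih => simp [seg, List.range_succ, ih]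
      exact key s
  -- the approximation sequence
  refine ⟨fun s => seg (g s) s, ⟨hσc, ?_⟩, ?_⟩
  · -- convergence
    intro n
    obtain ⟨s0, hs0⟩ := seg_stab hgA n
    refine ⟨max s0 n, fun s hs => ?_⟩
    rw [seg_take (g s) (le_trans (le_max_right _ _) hs)]
    exact hs0 s (le_trans (le_max_left _ _) hs)
  · -- Σ₁-correctness
    intro S ⟨f, hf, hfS⟩ hSinf
    set V : Set BStr := {τ | ∃ s ∈ S, seg (g s) s = τ} with hV
    have hV01 : Sigma01 V := by
      refine ⟨fun τ p => bif decide (seg (g p.unpair.1) p.unpair.1 = τ)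
        then f p.unpair.1 p.unpair.2 else false, ?_, ?_⟩
      · have hc : Computable fun a : BStr × ℕ =>
            decide (seg (g a.2.unpair.1) a.2.unpair.1 = a.1) :=
          Primrec.eq.decide.to_comp.comp
            (hσc.comp ((Primrec.fst.comp (Primrec.unpair.comp Primrec.snd)).to_comp))
            Computable.fst
        have hft : Computable fun a : BStr × ℕ => f a.2.unpair.1 a.2.unpair.2 :=
          hf.comp ((Primrec.fst.comp (Primrec.unpair.comp Primrec.snd)).to_comp)
            ((Primrec.snd.comp (Primrec.unpair.comp Primrec.snd)).to_comp)
        exact (Computable.cond hc hft (Computable.const false)).to₂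
      · intro τ
        constructor
        · rintro ⟨s, hsS, hst⟩
          obtain ⟨n, hn⟩ := (hfS s).1 hsS
          exact ⟨Nat.pair s n, by simp [hst, hn]⟩
        · rintro ⟨p, hp⟩
          by_cases h : seg (g p.unpair.1) p.unpair.1 = τ
          · exact ⟨p.unpair.1, (hfS _).2 ⟨p.unpair.2, by simpa [h] using hp⟩, h⟩
          · simp [h] at hp
    rcases hA V hV01 with ⟨k, s, hsS, hst⟩ | ⟨k, hk⟩
    · refine ⟨s, hsS, ?_⟩
      show seg (g s) s = seg A (seg (g s) s).length
      rw [hst, seg_length]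
    · exfalso
      obtain ⟨s0, hs0⟩ := seg_stab hgA k
      obtain ⟨s, hsS, hs⟩ := hSinf.exists_gt (max s0 k)
      have hs' : s0 ≤ s := le_trans (le_max_left _ _) hs.le
      have hk' : k ≤ s := le_trans (le_max_right _ _) hs.le
      have hpre : seg A k <+: seg (g s) s := by
        rw [← hs0 s hs']
        exact seg_prefix _ hk'
      exact hk _ hpre ⟨s, hsS, rfl⟩
end

section
/- Every 1-generic Turing degree strictly below 0′ is thin: if A is 1-generic and A <_T 0′, then there is a recursive tree T (over an alphabet coding {0,1,B} into binary) such that [T] is a thin Π⁰₁ class containing a path C with C ≡_T A. -/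
/-- The three-letter alphabet `{0,1,B}`: `none` is the blank symbol `B`. -/
abbrev Sym3 := Option Bool

/-- Delete all blanks `B` from a string over `{0,1,B}`. -/
def delB (τ : List Sym3) : BStr := τ.filterMap id

/-- The level-marker function `l(s)` of the construction:
`l(0)=0`, `l(1)=|σ_0|+1`, `l(s+2)=l(s+1)+|σ_{s+1}|-|σ_s|`. -/
def lvl (σs : ℕ → BStr) : ℕ → ℕ
  | 0 => 0
  | 1 => (σs 0).length + 1
  | (s+2) => lvl σs (s+1) + ((σs (s+1)).length - (σs s).length)

/-- The stage during which level `n` of the tree is constructed: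
the `s` with `l(s) ≤ n < l(s+1)`. -/
def stg (σs : ℕ → BStr) (n : ℕ) : ℕ :=
  ((List.range (n + 2)).filter (fun s => lvl σs (s + 1) ≤ n)).length

/-- The tree `T ⊆ {0,1,B}^{<ω}` constructed from the approximation `(σ_s)`:
a string `τ` at a level built during stage `s` whose `B`-deleted part is an
initial segment of `σ_s` gets both children `0` and `1`; all other strings are
extended only by the blank `B`. -/
inductive TreeT (σs : ℕ → BStr) : List Sym3 → Prop
  | nil : TreeT σs []
  | ext (τ : List Sym3) (a : Sym3) : TreeT σs τ →
      (if delB τ <+: σs (stg σs τ.length) then a ≠ none else a = none) →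
      TreeT σs (τ ++ [a])

def List.get? {α : Type _} (l : List α) (n : ℕ) : Option α := l[n]?

@[simp] theorem List.get?_eq_getElem? {α : Type _} (l : List α) (n : ℕ) : l.get? n = l[n]? := rfl

theorem List.get?_append {α : Type _} {l₁ l₂ : List α} {n : ℕ} (hn : n < l₁.length) :
    (l₁ ++ l₂).get? n = l₁.get? n := List.getElem?_append_left hn

@[simp] theorem List.get?_cons_zero {α : Type _} {a : α} {l : List α} : (a :: l).get? 0 = some a := rfl

theorem List.get?_concat_length {α : Type _} (l : List α) (a : α) :
    (l ++ [a]).get? l.length = some a := List.getElem?_concat_length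

theorem List.get?_eq_some {α : Type _} {l : List α} {n : ℕ} {a : α} :
    l.get? n = some a ↔ ∃ h : n < l.length, l[n] = a := List.getElem?_eq_some_iff

theorem Computable.list_get? {α : Type _} [Primcodable α] : Computable₂ (@List.get? α) :=
  Computable.list_getElem?

namespace Aux

/- ## seg lemmas -/
@[simp] theorem seg_length {α : Type} (A : ℕ → α) (k : ℕ) : (seg A k).length = k := by
  simp [seg]

theorem seg_succ {α : Type} (A : ℕ → α) (k : ℕ) : seg A (k+1) = seg A k ++ [A k] := by
  simp [seg, List.range_succ]

theorem seg_take {α : Type} (A : ℕ → α) {m n : ℕ} (h : m ≤ n) :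
    (seg A n).take m = seg A m := by
  simp [seg, ← List.map_take, List.take_range, Nat.min_eq_left h]

theorem seg_prefix {α : Type} (A : ℕ → α) {m n : ℕ} (h : m ≤ n) :
    seg A m <+: seg A n := by
  rw [List.prefix_iff_eq_take, seg_length, seg_take A h]

theorem prefix_seg {α : Type} {A : ℕ → α} {l : List α} {n : ℕ} (h : l <+: seg A n) :
    l = seg A l.length := by
  have hl : l.length ≤ n := by
    have := h.length_le; simpa using this
  rw [List.prefix_iff_eq_take] at h
  conv_lhs => rw [h, seg_take A hl]

theorem seg_ext {α : Type} {A B : ℕ → α} {k : ℕ} (h : ∀ i < k, A i = B i) :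
    seg A k = seg B k := by
  unfold seg
  apply List.map_congr_left
  intro i hi
  exact h i (List.mem_range.mp hi)

theorem seg_get? {α : Type} (A : ℕ → α) {x k : ℕ} (h : x < k) :
    (seg A k).get? x = some (A x) := by
  simp [seg, List.get?_eq_getElem?, List.getElem?_map, List.getElem?_range h]

theorem seg_ext_iff {α : Type} {A B : ℕ → α} {k : ℕ} :
    seg A k = seg B k ↔ ∀ i < k, A i = B i := by
  constructor
  · intro h i hi
    have := congrArg (fun l => l.get? i) h
    simp only [seg_get? A hi, seg_get? B hi] at this
    exact Option.some_injective _ this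
  · exact seg_ext

/- ## delB lemmas -/
@[simp] theorem delB_nil : delB [] = [] := rfl

theorem delB_append (τ ρ : List Sym3) : delB (τ ++ ρ) = delB τ ++ delB ρ := by
  simp [delB]

theorem delB_length_le (τ : List Sym3) : (delB τ).length ≤ τ.length := by
  simpa [delB] using List.length_filterMap_le id τ

theorem delB_prefix {τ ρ : List Sym3} (h : τ <+: ρ) : delB τ <+: delB ρ := by
  obtain ⟨t, rfl⟩ := h
  exact ⟨delB t, (delB_append τ t).symm⟩

/- ## prefix/list lemmas -/
theorem prefix_get? {α : Type} {l l' : List α} (h : l <+: l') {x : ℕ} (hx : x < l.length) :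
    l'.get? x = l.get? x := by
  obtain ⟨t, rfl⟩ := h
  exact List.get?_append hx

theorem prefix_take {α : Type} {l l' : List α} (h : l <+: l') {i : ℕ} (hi : i ≤ l.length) :
    l'.take i = l.take i := by
  rw [List.prefix_iff_eq_take] at h
  rw [h, List.take_take, Nat.min_eq_left hi]

theorem prefix_eq_of_length {α : Type} {l l' : List α} (h : l <+: l')
    (hl : l'.length ≤ l.length) : l = l' := by
  exact List.IsPrefix.eq_of_length h (le_antisymm h.length_le hl)

/- ## bool list helpers -/
def allId (l : List Bool) : Bool := l.foldr (· && ·) true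

theorem allId_iff (l : List Bool) : allId l = true ↔ ∀ b ∈ l, b = true := by
  induction l with
  | nil => simp [allId]
  | cons a l ih => simp [allId, List.foldr] at *; intro _; exact ih

def firstSome {α : Type} (l : List (Option α)) : Option α :=
  l.foldr (fun o r => o <|> r) none

theorem firstSome_nil {α : Type} : firstSome ([] : List (Option α)) = none := rfl

theorem firstSome_append {α : Type} (l₁ l₂ : List (Option α)) :
    firstSome (l₁ ++ l₂) = (firstSome l₁ <|> firstSome l₂) := by
  induction l₁ with
  | nil => simp [firstSome]
  | cons a l ih =>
    simp [firstSome, List.foldr_append] at *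
    cases a <;> simp [ih, Option.orElse]

/- prefix test -/
def pfxb {α : Type} [DecidableEq α] (l₁ l₂ : List α) : Bool := decide (l₂.take l₁.length = l₁)

theorem pfxb_iff {α : Type} [DecidableEq α] (l₁ l₂ : List α) :
    pfxb l₁ l₂ = true ↔ l₁ <+: l₂ := by
  rw [List.prefix_iff_eq_take, pfxb, decide_eq_true_iff, eq_comm]

end Aux

namespace Aux

open Primrec in
theorem primrec_opts {α : Type} [Primcodable α] :
    Primrec (fun l : List (Option α) => l.filterMap id) := by
  have h : Primrec₂ (fun (_ : List (Option α)) (p : Option α × List α) =>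
      Option.casesOn p.1 p.2 (fun b => b :: p.2) : List (Option α) → Option α × List α → List α) :=
    Primrec.option_casesOn (Primrec.fst.comp Primrec.snd) (Primrec.snd.comp Primrec.snd)
      ((Primrec.list_cons.comp Primrec.snd
        ((Primrec.snd.comp Primrec.snd).comp Primrec.fst)).to₂)
  have := Primrec.list_foldr (Primrec.id (α := List (Option α))) (Primrec.const ([] : List α)) h
  have aux : ∀ l : List (Option α),
      l.foldr (fun (b : Option α) (s : List α) => Option.casesOn b s (fun x => x :: s)) [] =
        l.filterMap id := by
    intro l
    induction l with
    | nil => simp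
    | cons a t ih => cases a <;> simp [List.filterMap_cons, ih]
  exact this.of_eq fun l => aux l

theorem primrec_delB : Primrec delB := primrec_opts

open Primrec in
theorem primrec_take {α : Type} [Primcodable α] :
    Primrec₂ (fun (l : List α) (n : ℕ) => l.take n) := by
  have h1 : Primrec₂ (fun (l : List α) (n : ℕ) =>
      ((List.range n).map (fun i => l.get? i)).filterMap id) := by
    have hmap : Primrec₂ (fun (l : List α) (n : ℕ) => (List.range n).map (fun i => l.get? i)) :=
      (Primrec.list_map (Primrec.list_range.comp Primrec.snd)
        ((Primrec.list_getElem?.comp (Primrec.fst.comp Primrec.fst) Primrec.snd).to₂)).to₂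
    exact (primrec_opts.comp hmap).to₂
  refine h1.of_eq fun l n => ?_
  induction n with
  | zero => simp
  | succ n ih =>
    rw [List.range_succ, List.map_append, List.filterMap_append, ih, List.take_succ]
    cases h : l[n]? <;> simp [List.get?_eq_getElem?, h]

theorem primrec_pfxb {α : Type} [Primcodable α] [DecidableEq α] :
    Primrec₂ (fun (l₁ l₂ : List α) => pfxb l₁ l₂) := by
  have h : Primrec (fun p : List α × List α => decide (p.2.take p.1.length = p.1)) :=
    PrimrecPred.decide <| Primrec.eq.comp
      ((primrec_take (α := α)).comp Primrec.snd (Primrec.list_length.comp Primrec.fst))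
      Primrec.fst
  exact h.to₂.of_eq fun l₁ l₂ => rfl

open Primrec in
theorem primrec_allId : Primrec allId := by
  have h : Primrec₂ (fun (_ : List Bool) (p : Bool × Bool) => p.1 && p.2) :=
    (Primrec.dom_bool₂ (· && ·)).comp
      ((Primrec.fst.comp Primrec.snd).to₂ : Primrec₂ fun (_ : List Bool) (p : Bool × Bool) => p.1)
      ((Primrec.snd.comp Primrec.snd).to₂)
  have := Primrec.list_foldr (Primrec.id (α := List Bool)) (Primrec.const true) h
  exact this.of_eq fun l => rfl

open Primrec in
theorem primrec_firstSome {α : Type} [Primcodable α] :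
    Primrec (firstSome (α := α)) := by
  have h : Primrec₂ (fun (_ : List (Option α)) (p : Option α × Option α) => p.1 <|> p.2) :=
    (Primrec.option_orElse.comp (Primrec.fst.comp Primrec.snd)
      (Primrec.snd.comp Primrec.snd)).to₂
  exact (Primrec.list_foldr (Primrec.id) (Primrec.const none) h).of_eq fun l => rfl

theorem computable_mapRange {α β : Type} [Primcodable α] [Primcodable β]
    {F : α → ℕ → β} (hF : Computable₂ F) :
    Computable₂ (fun (a : α) (n : ℕ) => (List.range n).map (F a)) := by
  have h : Computable (fun p : α × ℕ =>
      (Nat.rec ([] : List β) (fun y IH => IH ++ [F p.1 y]) p.2 : List β)) := by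
    exact Computable.nat_rec (f := fun p : α × ℕ => p.2)
      (g := fun _ : α × ℕ => ([] : List β))
      (h := fun (p : α × ℕ) (q : ℕ × List β) => q.2 ++ [F p.1 q.1])
      Computable.snd (Computable.const ([] : List β))
      ((Computable.list_concat.comp (Computable.snd.comp Computable.snd)
        (hF.comp (Computable.fst.comp Computable.fst)
          (Computable.fst.comp Computable.snd))).to₂)
  have he : ∀ p : α × ℕ,
      (Nat.rec ([] : List β) (fun y IH => IH ++ [F p.1 y]) p.2 : List β) =
        (List.range p.2).map (F p.1) := by
    rintro ⟨a, n⟩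
    induction n with
    | zero => simp
    | succ n ih =>
      show (Nat.rec ([] : List β) (fun y IH => IH ++ [F a y]) n : List β) ++ [F a n] = _
      rw [List.range_succ, List.map_append]
      simp only at ih
      rw [ih]
      simp
  exact Computable₂.mk (h.of_eq he)

theorem map_range_getD {α β : Type} (d : α) (g : α → β) :
    ∀ l : List α, (List.range l.length).map (fun i => g ((l.get? i).getD d)) = l.map g := by
  intro l
  induction l with
  | nil => simp
  | cons a t ih =>
    rw [List.length_cons, List.range_succ_eq_map, List.map_cons, List.map_map]
    simp only [List.get?_cons_zero, Option.getD_some, List.map_cons]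
    rw [← ih]
    congr 1

theorem computable_mapList {α β σ : Type} [Primcodable α] [Primcodable β] [Primcodable σ]
    (d : β) {l : α → List β} {g : α → β → σ} (hl : Computable l) (hg : Computable₂ g) :
    Computable (fun a => (l a).map (g a)) := by
  have h : Computable (fun a =>
      (List.range (l a).length).map (fun i => g a (((l a).get? i).getD d))) := by
    have hF : Computable₂ (fun (a : α) (i : ℕ) => g a (((l a).get? i).getD d)) :=
      (hg.comp Computable.fst
        (Computable.option_getD
          (Computable.list_get?.comp (hl.comp Computable.fst) Computable.snd)
          (Computable.const d))).to₂
    exact (computable_mapRange hF).comp Computable.id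
      (Computable.list_length.comp hl)
  refine h.of_eq fun a => ?_
  exact map_range_getD d (g a) (l a)

/-- All `Sym3`-strings of a given length. -/
def listsLen : ℕ → List (List Sym3) :=
  Nat.rec [[]] (fun _ L => L.flatMap
    (fun t => [t ++ [none], t ++ [(some false : Sym3)], t ++ [(some true : Sym3)]]))

theorem mem_listsLen (n : ℕ) (t : List Sym3) : t ∈ listsLen n ↔ t.length = n := by
  induction n generalizing t with
  | zero => simp [listsLen, List.length_eq_zero_iff]
  | succ n ih =>
    show t ∈ (listsLen n).flatMap _ ↔ _
    rw [List.mem_flatMap]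
    constructor
    · rintro ⟨s, hs, ht⟩
      have hsl := (ih s).mp hs
      simp only [List.mem_cons, List.not_mem_nil, or_false] at ht
      rcases ht with rfl | rfl | rfl <;> simp [hsl]
    · intro ht
      rcases List.eq_nil_or_concat t with rfl | ⟨s, a, rfl⟩
      · simp at ht
      · refine ⟨s, (ih s).mpr ?_, ?_⟩
        · simpa using ht
        · rcases a with _ | b
          · simp
          · cases b <;> simp

open Primrec in
theorem primrec_listsLen : Primrec listsLen := by
  have hstep : Primrec₂ (fun (_ : ℕ) (t : List Sym3) =>
      [t ++ [(none : Sym3)], t ++ [(some false : Sym3)], t ++ [(some true : Sym3)]]) := by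
    have h1 : Primrec (fun t : List Sym3 => t ++ [(none : Sym3)]) :=
      Primrec.list_concat.comp Primrec.id (Primrec.const _)
    have h2 : Primrec (fun t : List Sym3 => t ++ [(some false : Sym3)]) :=
      Primrec.list_concat.comp Primrec.id (Primrec.const _)
    have h3 : Primrec (fun t : List Sym3 => t ++ [(some true : Sym3)]) :=
      Primrec.list_concat.comp Primrec.id (Primrec.const _)
    exact (Primrec.list_cons.comp (h1.comp Primrec.snd)
      (Primrec.list_cons.comp (h2.comp Primrec.snd)
        (Primrec.list_cons.comp (h3.comp Primrec.snd) (Primrec.const [])))).to₂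
  have hstep1 : Primrec (fun t : List Sym3 =>
      [t ++ [(none:Sym3)], t ++ [(some false:Sym3)], t ++ [(some true:Sym3)]]) :=
    hstep.comp (Primrec.const 0) Primrec.id
  have h : Primrec₂ (fun (_ : ℕ) (p : ℕ × List (List Sym3)) => p.2.flatMap
      (fun t => [t ++ [(none:Sym3)], t ++ [(some false:Sym3)], t ++ [(some true:Sym3)]])) := by
    exact (Primrec.list_flatMap (Primrec.snd.comp Primrec.snd)
      ((hstep1.comp Primrec.snd).to₂)).to₂
  exact (Primrec.nat_rec' Primrec.id (Primrec.const [[]]) h)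

end Aux

namespace Aux

theorem stab {P : ℕ → ℕ → Prop} (h : ∀ x, ∃ s0, ∀ s ≥ s0, P s x) :
    ∀ m, ∃ s0, ∀ s ≥ s0, ∀ x < m, P s x := by
  intro m
  induction m with
  | zero => exact ⟨0, fun s _ x hx => absurd hx (Nat.not_lt_zero x)⟩
  | succ m ih =>
    obtain ⟨s1, h1⟩ := ih
    obtain ⟨s2, h2⟩ := h m
    refine ⟨max s1 s2, fun s hs x hx => ?_⟩
    rcases Nat.lt_succ_iff_lt_or_eq.mp hx with h' | rfl
    · exact h1 s (le_trans (le_max_left _ _) hs) x h'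
    · exact h2 s (le_trans (le_max_right _ _) hs)

def Kap (s n : ℕ) : Bool :=
  (Nat.Partrec.Code.evaln s (Denumerable.ofNat Nat.Partrec.Code n) n).isSome

theorem primrec_Kap : Primrec₂ Kap := by
  have h : Primrec (fun p : ℕ × ℕ =>
      (Nat.Partrec.Code.evaln p.1 (Denumerable.ofNat Nat.Partrec.Code p.2) p.2).isSome) :=
    Primrec.option_isSome.comp
      (Nat.Partrec.Code.primrec_evaln.comp
        ((Primrec.fst.pair ((Primrec.ofNat _).comp Primrec.snd)).pair Primrec.snd))
  exact h.to₂

theorem Kap_tendsto (n : ℕ) : ∃ s0, ∀ s ≥ s0, Kap s n = K n := by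
  classical
  by_cases hd : (Nat.Partrec.Code.eval (Denumerable.ofNat Nat.Partrec.Code n) n).Dom
  · obtain ⟨k, hk⟩ := Nat.Partrec.Code.evaln_complete.mp (Part.get_mem hd)
    refine ⟨k, fun s hs => ?_⟩
    have h2 := Nat.Partrec.Code.evaln_mono hs hk
    unfold Kap K
    rw [Option.mem_def] at h2
    simp [h2, hd]
  · refine ⟨0, fun s _ => ?_⟩
    unfold Kap K
    simp only [hd, if_false]
    cases he : Nat.Partrec.Code.evaln s (Denumerable.ofNat Nat.Partrec.Code n) n with
    | none => rfl
    | some x =>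
      exact absurd (Part.dom_iff_mem.mpr ⟨x, Nat.Partrec.Code.evaln_sound he⟩) hd

theorem firstSome_none {α : Type} {l : List (Option α)} (h : ∀ o ∈ l, o = none) :
    firstSome l = none := by
  induction l with
  | nil => rfl
  | cons a t ih =>
    have ha := h a List.mem_cons_self
    subst ha
    show (none <|> firstSome t) = none
    simp [ih fun o ho => h o (List.mem_cons_of_mem _ ho)]

theorem firstSome_map_range_eq {α : Type} (g : ℕ → Option α) {m i : ℕ} (him : i < m)
    (hsome : (g i).isSome = true) (hmin : ∀ j < i, g j = none) :
    firstSome ((List.range m).map g) = g i := by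
  have hdecomp : List.range m = List.range (i+1) ++ (List.range (m - (i+1))).map (i+1+·) := by
    rw [← List.range_add]
    congr 1
    omega
  rw [hdecomp, List.map_append, firstSome_append]
  have h1 : firstSome ((List.range (i+1)).map g) = g i := by
    rw [List.range_succ, List.map_append, firstSome_append]
    rw [firstSome_none (l := (List.range i).map g) ?hnone]
    case hnone =>
      intro o ho
      obtain ⟨j, hj, rfl⟩ := List.mem_map.mp ho
      exact hmin j (List.mem_range.mp hj)
    show (none <|> (g i <|> none)) = g i
    obtain ⟨a, ha⟩ := Option.isSome_iff_exists.mp hsome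
    simp [ha]
  rw [h1]
  obtain ⟨a, ha⟩ := Option.isSome_iff_exists.mp hsome
  simp [ha]

section Approx

variable (φ : List Bool → ℕ → Option Bool)

/-- Stage-`s` approximation to `A n`, computed by running `φ` on initial segments of the
stage-`s` approximation of `K`. -/
def apx (s n : ℕ) : Bool :=
  (firstSome ((List.range (s+1)).map (fun k => φ (seg (Kap s) k) n))).getD false

/-- The limit-computable approximation to `A`: a length-`s` string at stage `s`. -/
def sigs (s : ℕ) : BStr := (List.range s).map (apx φ s)

@[simp] theorem sigs_length (s : ℕ) : (sigs φ s).length = s := by simp [sigs]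

variable {φ}

theorem computable_apx (hφ : Computable₂ φ) : Computable₂ (apx φ) := by
  have hseg : Computable₂ (fun (s k : ℕ) => seg (Kap s) k) :=
    computable_mapRange primrec_Kap.to_comp
  have hinner : Computable₂ (fun (p : ℕ × ℕ) (k : ℕ) => φ (seg (Kap p.1) k) p.2) :=
    (hφ.comp (hseg.comp (Computable.fst.comp Computable.fst) Computable.snd)
      (Computable.snd.comp Computable.fst)).to₂
  have hlist : Computable (fun p : ℕ × ℕ =>
      (List.range (p.1+1)).map (fun k => φ (seg (Kap p.1) k) p.2)) :=
    (computable_mapRange hinner).comp Computable.id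
      (Computable.succ.comp Computable.fst)
  exact Computable₂.mk
    (Computable.option_getD ((primrec_firstSome.to_comp).comp hlist) (Computable.const false))

theorem computable_sigs (hφ : Computable₂ φ) : Computable (sigs φ) :=
  (computable_mapRange (computable_apx hφ)).comp Computable.id Computable.id

variable {A : ℕ → Bool}
variable (hmono : ∀ {σ τ : List Bool} {x : ℕ} {b : Bool}, σ <+: τ → φ σ x = some b → φ τ x = some b)
variable (happ : ∀ x, ∃ k, φ (seg K k) x = some (A x))

include hmono happ in
theorem phi_val_unique {j x : ℕ} {b : Bool} (h : φ (seg K j) x = some b) : b = A x := by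
  obtain ⟨k, hk⟩ := happ x
  have h1 : φ (seg K (max j k)) x = some b :=
    hmono (seg_prefix K (le_max_left j k)) h
  have h2 : φ (seg K (max j k)) x = some (A x) :=
    hmono (seg_prefix K (le_max_right j k)) hk
  rw [h1] at h2
  exact Option.some_injective _ h2

include hmono happ in
theorem apx_tendsto (n : ℕ) : ∃ s0, ∀ s ≥ s0, apx φ s n = A n := by
  classical
  obtain ⟨k, hk⟩ := happ n
  obtain ⟨s1, hs1⟩ := stab (P := fun s x => Kap s x = K x) (fun x => Kap_tendsto x) k
  refine ⟨max s1 k, fun s hs => ?_⟩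
  have hs1' : s ≥ s1 := le_trans (le_max_left _ _) hs
  have hsk : k ≤ s := le_trans (le_max_right _ _) hs
  set g : ℕ → Option Bool := fun j => φ (seg (Kap s) j) n with hg
  have hsegeq : ∀ i ≤ k, seg (Kap s) i = seg K i := by
    intro i hi
    exact seg_ext fun x hx => hs1 s hs1' x (lt_of_lt_of_le hx hi)
  have hgk : g k = some (A n) := by rw [hg]; simp only; rw [hsegeq k le_rfl]; exact hk
  have hex : ∃ j, (g j).isSome = true := ⟨k, by rw [hgk]; rfl⟩
  set i := Nat.find hex with hi
  have hik : i ≤ k := Nat.find_le (by rw [hgk]; rfl)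
  have hsome : (g i).isSome = true := Nat.find_spec hex
  have hmin : ∀ j < i, g j = none := by
    intro j hj
    have := Nat.find_min hex hj
    cases hgj : g j with
    | none => rfl
    | some b => rw [hgj] at this; simp at this
  have him : i < s + 1 := by omega
  have : apx φ s n = (g i).getD false := by
    unfold apx
    rw [firstSome_map_range_eq g him hsome hmin]
  rw [this]
  obtain ⟨b, hb⟩ := Option.isSome_iff_exists.mp hsome
  have hb' : φ (seg K i) n = some b := by
    rw [← hsegeq i hik]; exact hb
  rw [hb, phi_val_unique (φ := φ) (A := A) hmono happ hb']
  rfl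

include hmono happ in
theorem sigs_conv (n : ℕ) : ∃ s0, ∀ s ≥ s0, (sigs φ s).take n = seg A n := by
  obtain ⟨s1, hs1⟩ := stab (P := fun s x => apx φ s x = A x) (fun x => apx_tendsto (φ := φ) (A := A) hmono happ x) n
  refine ⟨max s1 n, fun s hs => ?_⟩
  have hs1' : s ≥ s1 := le_trans (le_max_left _ _) hs
  have hsn : n ≤ s := le_trans (le_max_right _ _) hs
  unfold sigs
  rw [← List.map_take, List.take_range, Nat.min_eq_left hsn]
  exact seg_ext fun x hx => hs1 s hs1' x hx

end Approx

end Aux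

namespace Aux

section Tree

variable (σ : ℕ → BStr) (A : ℕ → Bool)

/-- Condition for position `i` of `τ` to be legal. -/
def nodeOK (τ : List Sym3) (i : ℕ) : Bool :=
  decide (((τ.get? i).getD none).isSome = pfxb (delB (τ.take i)) (σ i))

/-- Characteristic function of the tree. -/
def TB (τ : List Sym3) : Bool := allId ((List.range τ.length).map (nodeOK σ τ))

variable {σ A}

theorem TB_iff {τ : List Sym3} : TB σ τ = true ↔
    ∀ i < τ.length, ((τ.get? i).getD none).isSome = pfxb (delB (τ.take i)) (σ i) := by
  rw [TB, allId_iff]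
  constructor
  · intro h i hi
    have := h _ (List.mem_map.mpr ⟨i, List.mem_range.mpr hi, rfl⟩)
    rwa [nodeOK, decide_eq_true_iff] at this
  · rintro h b hb
    obtain ⟨i, hi, rfl⟩ := List.mem_map.mp hb
    rw [nodeOK, decide_eq_true_iff]
    exact h i (List.mem_range.mp hi)

@[simp] theorem TB_nil : TB σ [] = true := rfl

theorem TB_prefix {τ τ' : List Sym3} (h : τ <+: τ') (h' : TB σ τ' = true) : TB σ τ = true := by
  rw [TB_iff] at h' ⊢
  intro i hi
  rw [← prefix_get? h hi, ← prefix_take h (le_of_lt hi)]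
  exact h' i (lt_of_lt_of_le hi h.length_le)

theorem TB_append_iff {τ : List Sym3} {a : Sym3} :
    TB σ (τ ++ [a]) = true ↔ TB σ τ = true ∧ a.isSome = pfxb (delB τ) (σ τ.length) := by
  constructor
  · intro h
    refine ⟨TB_prefix (List.prefix_append τ [a]) h, ?_⟩
    have := (TB_iff.mp h) τ.length (by simp)
    rwa [List.get?_concat_length, List.take_left] at this
  · rintro ⟨h1, h2⟩
    rw [TB_iff]
    intro i hi
    rcases Nat.lt_succ_iff_lt_or_eq.mp (by simpa using hi) with h' | rfl
    · rw [prefix_get? (List.prefix_append τ [a]) h',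
        prefix_take (List.prefix_append τ [a]) (le_of_lt h')]
      exact TB_iff.mp h1 i h'
    · rwa [List.get?_concat_length, List.take_left]

variable (σ A) in
/-- Level-by-level construction of the distinguished path following `A`. -/
def segCf : ℕ → List Sym3 :=
  Nat.rec [] (fun n ρ =>
    ρ ++ [if pfxb (delB ρ) (σ n) = true then some (A (delB ρ).length) else none])

theorem segCf_succ (n : ℕ) : segCf σ A (n+1) = segCf σ A n ++
    [if pfxb (delB (segCf σ A n)) (σ n) = true
      then some (A (delB (segCf σ A n)).length) else none] := rfl

@[simp] theorem segCf_length (n : ℕ) : (segCf σ A n).length = n := by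
  induction n with
  | zero => rfl
  | succ n ih => rw [segCf_succ]; simp [ih]

variable (σ A) in
/-- The distinguished path. -/
def Cpath (n : ℕ) : Sym3 := ((segCf σ A (n+1)).get? n).getD none

theorem segCf_prefix {m n : ℕ} (h : m ≤ n) : segCf σ A m <+: segCf σ A n := by
  induction n with
  | zero => rw [Nat.le_zero.mp h]
  | succ n ih =>
    rcases Nat.lt_succ_iff_lt_or_eq.mp (Nat.lt_succ_of_le h) with h' | rfl
    · exact (ih (Nat.lt_succ_iff.mp h')).trans ⟨_, (segCf_succ (σ := σ) (A := A) n).symm⟩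
    · exact List.prefix_rfl

theorem seg_Cpath (n : ℕ) : seg (Cpath σ A) n = segCf σ A n := by
  induction n with
  | zero => rfl
  | succ n ih =>
    rw [seg_succ, ih, segCf_succ]
    congr 1
    rw [Cpath, segCf_succ]
    rw [show (segCf σ A n ++ [if pfxb (delB (segCf σ A n)) (σ n) = true
      then some (A (delB (segCf σ A n)).length) else none]).get? n =
        some (if pfxb (delB (segCf σ A n)) (σ n) = true
      then some (A (delB (segCf σ A n)).length) else none) from ?_]
    · rfl
    · have := List.get?_concat_length (segCf σ A n)
        (if pfxb (delB (segCf σ A n)) (σ n) = true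
          then some (A (delB (segCf σ A n)).length) else none)
      rwa [segCf_length] at this

theorem TB_segCf (n : ℕ) : TB σ (segCf σ A n) = true := by
  induction n with
  | zero => rfl
  | succ n ih =>
    rw [segCf_succ, TB_append_iff]
    refine ⟨ih, ?_⟩
    rw [segCf_length]
    cases hp : pfxb (delB (segCf σ A n)) (σ n) <;> simp [hp]

theorem delB_segCf (n : ℕ) :
    delB (segCf σ A n) = seg A (delB (segCf σ A n)).length := by
  induction n with
  | zero => rfl
  | succ n ih =>
    rw [segCf_succ, delB_append]
    cases hp : pfxb (delB (segCf σ A n)) (σ n)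
    · rw [if_neg (show ¬ (false = true) by simp)]
      rw [show delB [(none : Sym3)] = [] from rfl, List.append_nil]
      exact ih
    · rw [if_pos rfl]
      rw [show delB [(some (A (delB (segCf σ A n)).length) : Sym3)]
        = [A (delB (segCf σ A n)).length] from rfl]
      rw [List.length_append, List.length_singleton, seg_succ]
      exact congrArg (fun l => l ++ [A (delB (segCf σ A n)).length]) ih

variable (σ A) in
/-- Number of bits of `A` coded by level `n`. -/
def cnt (n : ℕ) : ℕ := (delB (segCf σ A n)).length

theorem cnt_mono : Monotone (cnt σ A) := by
  intro m n h
  exact (delB_prefix (segCf_prefix h)).length_le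

theorem cnt_step (n : ℕ) : cnt σ A (n+1) ≤ cnt σ A n + 1 := by
  unfold cnt
  rw [segCf_succ, delB_append, List.length_append]
  have : ∀ a : Sym3, (delB [a]).length ≤ 1 := by rintro (_ | b) <;> simp [delB]
  have h := this (if pfxb (delB (segCf σ A n)) (σ n) = true
      then some (A (delB (segCf σ A n)).length) else none)
  omega

theorem nat_ivt {f : ℕ → ℕ} (hmono : Monotone f) (hstep : ∀ m, f (m+1) ≤ f m + 1)
    {n N j : ℕ} (hn : f n = j) (hN : j + 1 ≤ f N) : ∃ m, f m = j + 1 := by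
  classical
  have hex : ∃ m, j + 1 ≤ f m := ⟨N, hN⟩
  have hspec := Nat.find_spec hex
  have hnm : n < Nat.find hex := by
    by_contra hc
    have := hmono (Nat.le_of_not_lt hc)
    omega
  have hmin : ¬ j + 1 ≤ f (Nat.find hex - 1) := Nat.find_min hex (by omega)
  have hs := hstep (Nat.find hex - 1)
  have heq : Nat.find hex - 1 + 1 = Nat.find hex := by omega
  rw [heq] at hs
  exact ⟨Nat.find hex, by omega⟩

variable (hlen : ∀ s, (σ s).length = s)
variable (hconv : ∀ n, ∃ s0, ∀ s ≥ s0, (σ s).take n = seg A n)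

include hlen hconv in
theorem cnt_surj (j : ℕ) : ∃ n, cnt σ A n = j := by
  induction j with
  | zero => exact ⟨0, rfl⟩
  | succ j ih =>
    obtain ⟨n, hn⟩ := ih
    obtain ⟨s0, hs0⟩ := hconv j
    set s := max (max n s0) j with hs
    rcases Nat.lt_or_ge (cnt σ A (s+1)) (j+1) with hlt | hge
    · exfalso
      have hcs : cnt σ A s = j := by
        have h1 : j ≤ cnt σ A s := hn ▸ cnt_mono (σ := σ) (A := A) (by omega)
        have h2 : cnt σ A s ≤ cnt σ A (s+1) := cnt_mono (σ := σ) (A := A) (Nat.le_succ s)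
        omega
      have hdel : delB (segCf σ A s) = seg A j := by
        have h3 := delB_segCf (σ := σ) (A := A) s
        unfold cnt at hcs
        rwa [hcs] at h3
      have hpfx : pfxb (delB (segCf σ A s)) (σ s) = true := by
        rw [pfxb, decide_eq_true_iff, hdel, seg_length]
        exact hs0 s (by omega)
      have : cnt σ A (s+1) = j + 1 := by
        unfold cnt
        rw [segCf_succ, hpfx, if_pos rfl, delB_append]
        rw [show delB [some (A (delB (segCf σ A s)).length)]
          = [A (delB (segCf σ A s)).length] from rfl]
        rw [List.length_append, List.length_singleton]
        unfold cnt at hcs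
        rw [hcs]
      omega
    · exact nat_ivt (cnt_mono (σ := σ) (A := A)) (fun m => cnt_step (σ := σ) (A := A) m) hn hge

/-- Rigidity: a tree node whose bit-content is a true initial segment of `A`
is an initial segment of the distinguished path. -/
theorem true_node_eq {τ : List Sym3} (hτ : TB σ τ = true)
    (hδ : delB τ = seg A (delB τ).length) : τ = segCf σ A τ.length := by
  induction τ using List.reverseRecOn with
  | nil => rfl
  | append_singleton ρ a ih =>
    obtain ⟨h1, h2⟩ := TB_append_iff.mp hτ
    have hρδ : delB ρ = seg A (delB ρ).length := by
      have hpfx : delB ρ <+: delB (ρ ++ [a]) := delB_prefix (List.prefix_append ρ [a])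
      rw [hδ] at hpfx
      exact prefix_seg hpfx
    have hρ := ih h1 hρδ
    have hlen2 : (ρ ++ [a]).length = ρ.length + 1 := by simp
    rw [hlen2, segCf_succ, ← hρ]
    suffices h : a = (if pfxb (delB ρ) (σ ρ.length) = true
        then some (A (delB ρ).length) else none) by rw [← h]
    cases hp : pfxb (delB ρ) (σ ρ.length) <;> rw [hp] at h2
    · show a = none
      cases a with
      | none => rfl
      | some b => simp at h2
    · show a = some (A (delB ρ).length)
      cases a with
      | none => simp at h2
      | some b =>
        have h4 : delB (ρ ++ [some b]) = delB ρ ++ [b] := by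
          rw [delB_append]; rfl
        rw [h4] at hδ
        rw [List.length_append, List.length_singleton] at hδ
        rw [seg_succ] at hδ
        conv_rhs at hδ => rw [← hρδ]
        have h5 : [b] = [A (delB ρ).length] := List.append_cancel_left hδ
        rw [List.singleton_inj] at h5
        rw [h5]

end Tree

end Aux

namespace Aux

section Tree2

variable {σ : ℕ → BStr} {A : ℕ → Bool}

theorem path_cond {X : ℕ → Sym3} (hX : ∀ k, TB σ (seg X k) = true) (n : ℕ) :
    (X n).isSome = pfxb (delB (seg X n)) (σ n) := by
  have h := hX (n+1)
  rw [seg_succ] at h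
  obtain ⟨_, h2⟩ := TB_append_iff.mp h
  rwa [seg_length] at h2

theorem get?_prefix_some {α : Type} {l l' : List α} (h : l <+: l') {x : ℕ} {b : α}
    (hb : l.get? x = some b) : l'.get? x = some b := by
  have hx : x < l.length := List.get?_eq_some.mp hb |>.1
  rw [prefix_get? h hx]
  exact hb

theorem freeze {X : ℕ → Sym3} (hX : ∀ k, TB σ (seg X k) = true) {m L : ℕ} (hmL : m ≤ L)
    (hbad : ∀ n ≥ L, ¬ (delB (seg X m) <+: σ n)) : ∀ n ≥ L, X n = none := by
  intro n hn
  cases hXn : X n with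
  | none => rfl
  | some b =>
    exfalso
    have hs : (X n).isSome = true := by rw [hXn]; rfl
    rw [path_cond hX n, pfxb_iff] at hs
    exact hbad n hn ((delB_prefix (seg_prefix X (le_trans hmL hn))).trans hs)

theorem isolate {X X' : ℕ → Sym3} {L : ℕ} (hfr : ∀ n ≥ L, X n = none)
    (hfr' : ∀ n ≥ L, X' n = none) (hseg : seg X L = seg X' L) : X = X' := by
  funext n
  rcases Nat.lt_or_ge n L with h | h
  · exact seg_ext_iff.mp hseg n h
  · rw [hfr n h, hfr' n h]

variable (hconv : ∀ n, ∃ s0, ∀ s ≥ s0, (σ s).take n = seg A n)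

include hconv in
theorem wrong_bound {ν : List Sym3} (hν : delB ν ≠ seg A (delB ν).length) (m : ℕ) :
    ∃ L ≥ m, ∀ n ≥ L, ¬ (delB ν <+: σ n) := by
  obtain ⟨s0, hs0⟩ := hconv (delB ν).length
  refine ⟨max m s0, le_max_left _ _, fun n hn hpf => hν ?_⟩
  rw [List.prefix_iff_eq_take] at hpf
  rw [hs0 n (le_trans (le_max_right _ _) hn)] at hpf
  exact hpf

include hconv in
theorem list_bound (m : ℕ) (l : List (List Sym3)) :
    ∃ L ≥ m, ∀ ν ∈ l, TB σ ν = true → ν.length = m → ν ≠ segCf σ A m →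
      ∀ n ≥ L, ¬ (delB ν <+: σ n) := by
  classical
  induction l with
  | nil => exact ⟨m, le_rfl, fun ν hν => absurd hν List.not_mem_nil⟩
  | cons ν t ih =>
    obtain ⟨L1, hL1m, hL1⟩ := ih
    by_cases hc : TB σ ν = true ∧ ν.length = m ∧ ν ≠ segCf σ A m
    · have hν : delB ν ≠ seg A (delB ν).length := by
        intro hδ
        have h := true_node_eq hc.1 hδ
        rw [hc.2.1] at h
        exact hc.2.2 h
      obtain ⟨L2, _, hL2⟩ := wrong_bound hconv hν m
      refine ⟨max L1 L2, le_trans hL1m (le_max_left _ _), ?_⟩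
      intro ν' hν' h1 h2 h3 n hn
      rcases List.mem_cons.mp hν' with rfl | hmem
      · exact hL2 n (le_trans (le_max_right _ _) hn)
      · exact hL1 ν' hmem h1 h2 h3 n (le_trans (le_max_left _ _) hn)
    · refine ⟨L1, hL1m, ?_⟩
      intro ν' hν' h1 h2 h3 n hn
      rcases List.mem_cons.mp hν' with rfl | hmem
      · exact absurd ⟨h1, h2, h3⟩ hc
      · exact hL1 ν' hmem h1 h2 h3 n hn

include hconv in
theorem uniform_bound (m : ℕ) :
    ∃ L ≥ m, ∀ ν : List Sym3, ν.length = m → TB σ ν = true → ν ≠ segCf σ A m →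
      ∀ n ≥ L, ¬ (delB ν <+: σ n) := by
  obtain ⟨L, hLm, hL⟩ := list_bound hconv m (listsLen m)
  exact ⟨L, hLm, fun ν hlen hTB hne =>
    hL ν ((mem_listsLen m ν).mpr hlen) hTB hlen hne⟩

theorem computable_TB (hσ : Computable σ) : Computable (TB σ) := by
  have hnode : Computable₂ (nodeOK σ) := by
    have h1 : Computable (fun p : List Sym3 × ℕ => ((p.1.get? p.2).getD none).isSome) :=
      Primrec.option_isSome.to_comp.comp
        (Computable.option_getD (Computable.list_get?.comp Computable.fst Computable.snd)
          (Computable.const none))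
    have h2 : Computable (fun p : List Sym3 × ℕ => pfxb (delB (p.1.take p.2)) (σ p.2)) :=
      (primrec_pfxb.to_comp).comp
        (primrec_delB.to_comp.comp
          (primrec_take.to_comp.comp Computable.fst Computable.snd))
        (hσ.comp Computable.snd)
    exact Computable₂.mk ((Primrec.eq.decide.to_comp).comp h1 h2)
  exact (primrec_allId.to_comp).comp
    ((computable_mapRange hnode).comp Computable.id Computable.list_length)

end Tree2

section Bseg

variable (σ : ℕ → BStr)

/-- Reconstruction of the distinguished path from a finite oracle string for `A`. -/
def bseg (α : BStr) : ℕ → List Sym3 :=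
  Nat.rec [] (fun n ρ =>
    ρ ++ [cond (pfxb (delB ρ) (σ n)) (some ((α.get? (delB ρ).length).getD false)) none])

variable {σ}

theorem bseg_succ (α : BStr) (n : ℕ) : bseg σ α (n+1) = bseg σ α n ++
    [cond (pfxb (delB (bseg σ α n)) (σ n))
      (some ((α.get? (delB (bseg σ α n)).length).getD false)) none] := rfl

@[simp] theorem bseg_length (α : BStr) (n : ℕ) : (bseg σ α n).length = n := by
  induction n with
  | zero => rfl
  | succ n ih => rw [bseg_succ]; simp [ih]

theorem bseg_eq_segCf {A : ℕ → Bool} {k n : ℕ} (hn : n ≤ k) :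
    bseg σ (seg A k) n = segCf σ A n := by
  induction n with
  | zero => rfl
  | succ n ih =>
    have hn' : n ≤ k := Nat.le_of_succ_le hn
    rw [bseg_succ, segCf_succ, ih hn']
    congr 1
    cases hp : pfxb (delB (segCf σ A n)) (σ n)
    · rw [cond_false, if_neg (by simp)]
    · rw [cond_true, if_pos rfl]
      congr 1
      have hj : (delB (segCf σ A n)).length < k := by
        have h1 := delB_length_le (segCf σ A n)
        rw [segCf_length] at h1
        omega
      rw [seg_get? A hj]
      rfl

theorem bseg_mono {α α' : BStr} (hp : α <+: α') : ∀ {n : ℕ}, n ≤ α.length →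
    bseg σ α n = bseg σ α' n := by
  intro n
  induction n with
  | zero => exact fun _ => rfl
  | succ n ih =>
    intro hn
    rw [bseg_succ, bseg_succ, ih (Nat.le_of_succ_le hn)]
    congr 3
    have hj : (delB (bseg σ α' n)).length < α.length := by
      have h1 := delB_length_le (bseg σ α' n)
      rw [bseg_length] at h1
      omega
    rw [prefix_get? hp hj]

theorem computable_bseg (hσ : Computable σ) : Computable₂ (bseg σ) := by
  have hstep : Computable₂ (fun (p : BStr × ℕ) (q : ℕ × List Sym3) =>
      q.2 ++ [cond (pfxb (delB q.2) (σ q.1))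
        (some ((p.1.get? (delB q.2).length).getD false)) none]) := by
    have hd : Computable (fun x : (BStr × ℕ) × ℕ × List Sym3 => delB x.2.2) :=
      primrec_delB.to_comp.comp (Computable.snd.comp Computable.snd)
    have hcnd : Computable (fun x : (BStr × ℕ) × ℕ × List Sym3 =>
        pfxb (delB x.2.2) (σ x.2.1)) :=
      primrec_pfxb.to_comp.comp hd (hσ.comp (Computable.fst.comp Computable.snd))
    have hval : Computable (fun x : (BStr × ℕ) × ℕ × List Sym3 =>
        (some ((x.1.1.get? (delB x.2.2).length).getD false) : Sym3)) :=
      Computable.option_some.comp (Computable.option_getD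
        (Computable.list_get?.comp (Computable.fst.comp Computable.fst)
          (Computable.list_length.comp hd))
        (Computable.const false))
    exact (Computable.list_concat.comp (Computable.snd.comp Computable.snd)
      (Computable.cond hcnd hval (Computable.const (none : Sym3)))).to₂
  exact Computable₂.mk (Computable.nat_rec (f := fun p : BStr × ℕ => p.2)
    (g := fun _ : BStr × ℕ => ([] : List Sym3))
    (h := fun (p : BStr × ℕ) (q : ℕ × List Sym3) =>
      q.2 ++ [cond (pfxb (delB q.2) (σ q.1))
        (some ((p.1.get? (delB q.2).length).getD false)) none])
    Computable.snd (Computable.const ([] : List Sym3)) hstep)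

variable (σ)

/-- The functional reducing the distinguished path to `A`. -/
def phiCA (α : BStr) (n : ℕ) : Option Sym3 :=
  cond (decide (n + 1 ≤ α.length)) (some (((bseg σ α (n+1)).get? n).getD none)) none

variable {σ}

theorem computable_phiCA (hσ : Computable σ) : Computable₂ (phiCA σ) := by
  have hb : Computable (fun p : BStr × ℕ => decide (p.2 + 1 ≤ p.1.length)) :=
    Primrec.nat_le.decide.to_comp.comp (Computable.succ.comp Computable.snd)
      (Computable.list_length.comp Computable.fst)
  have hv : Computable (fun p : BStr × ℕ =>
      (some (((bseg σ p.1 (p.2+1)).get? p.2).getD none) : Option Sym3)) :=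
    Computable.option_some.comp (Computable.option_getD
      (Computable.list_get?.comp
        ((computable_bseg hσ).comp Computable.fst (Computable.succ.comp Computable.snd))
        Computable.snd)
      (Computable.const none))
  exact Computable₂.mk (Computable.cond hb hv (Computable.const none))

theorem phiCA_mono {α α' : BStr} {n : ℕ} {b : Sym3} (h : α <+: α')
    (hb : phiCA σ α n = some b) : phiCA σ α' n = some b := by
  unfold phiCA at hb ⊢
  by_cases hg : n + 1 ≤ α.length
  · have hg' : n + 1 ≤ α'.length := le_trans hg h.length_le
    rw [decide_eq_true hg'] at *
    rw [decide_eq_true hg] at hb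
    rw [cond_true] at hb ⊢
    rw [← bseg_mono h hg]
    exact hb
  · rw [decide_eq_false hg, cond_false] at hb
    exact absurd hb (by simp)

theorem phiCA_applies {A : ℕ → Bool} (n : ℕ) :
    phiCA σ (seg A (n+1)) n = some (Cpath σ A n) := by
  unfold phiCA
  rw [decide_eq_true (by simp), cond_true, bseg_eq_segCf le_rfl]
  rfl

/-- The functional reducing `A` to the distinguished path. -/
def phiAC (τ : List Sym3) (x : ℕ) : Option Bool := (delB τ).get? x

theorem computable_phiAC : Computable₂ phiAC :=
  Computable₂.mk (Computable.list_get?.comp (primrec_delB.to_comp.comp Computable.fst)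
    Computable.snd)

theorem phiAC_mono {τ τ' : List Sym3} {x : ℕ} {b : Bool} (h : τ <+: τ')
    (hb : phiAC τ x = some b) : phiAC τ' x = some b :=
  get?_prefix_some (delB_prefix h) hb

end Bseg

end Aux

namespace Aux

theorem cond_ff_iff {a b : Bool} : (cond a b false) = true ↔ a = true ∧ b = true := by
  cases a <;> simp

section Main

variable {σ : ℕ → BStr} {A : ℕ → Bool}
variable (hconv : ∀ n, ∃ s0, ∀ s ≥ s0, (σ s).take n = seg A n)

include hconv in
theorem off_path_frz (m0 : ℕ) :
    ∃ L ≥ m0, ∀ X : ℕ → Sym3, (∀ k, TB σ (seg X k) = true) →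
      seg X m0 ≠ segCf σ A m0 → ∀ n ≥ L, X n = none := by
  obtain ⟨L, hLm, hL⟩ := uniform_bound hconv m0
  refine ⟨L, hLm, fun X hX hne => freeze hX hLm ?_⟩
  intro n hn
  exact hL (seg X m0) (seg_length X m0) (hX m0) hne n hn

/-- The Σ⁰₁ set of strings used in the genericity argument: bit-strings realized on the
tree by a node some extension level of which is not covered by `T'`. -/
def Vset (σ : ℕ → BStr) (T' : Set (List Sym3)) : Set BStr :=
  {δ : BStr | ∃ τ : List Sym3, TB σ τ = true ∧ delB τ = δ ∧
    ∃ n : ℕ, ∀ τ' : List Sym3, τ'.length = τ.length + n → τ' ∈ T' → ¬ τ <+: τ'}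

theorem sigma01_V (hσc : Computable σ) {f' : List Sym3 → Bool} (hf'c : Computable f')
    (T' : Set (List Sym3)) (hf' : ∀ τ, τ ∈ T' ↔ f' τ = true) :
    Sigma01 (Vset σ T') := by
  classical
  refine ⟨fun δ m => Option.casesOn (Encodable.decode (α := List Sym3) m.unpair.1) false
    (fun τ => cond (TB σ τ) (cond (decide (delB τ = δ))
      (allId ((listsLen (τ.length + m.unpair.2)).map
        (fun τ' => !(f' τ' && pfxb τ τ')))) false) false), ?_, ?_⟩
  · -- computability
    have ho : Computable (fun p : BStr × ℕ =>
        Encodable.decode (α := List Sym3) p.2.unpair.1) :=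
      Computable.decode.comp (Computable.fst.comp (Computable.unpair.comp Computable.snd))
    have hg : Computable₂ (fun (p : BStr × ℕ) (τ : List Sym3) =>
        cond (TB σ τ) (cond (decide (delB τ = p.1))
          (allId ((listsLen (τ.length + p.2.unpair.2)).map
            (fun τ' => !(f' τ' && pfxb τ τ')))) false) false) := by
      have c1 : Computable (fun x : (BStr × ℕ) × List Sym3 => TB σ x.2) :=
        (computable_TB hσc).comp Computable.snd
      have c2 : Computable (fun x : (BStr × ℕ) × List Sym3 => decide (delB x.2 = x.1.1)) :=
        Primrec.eq.decide.to_comp.comp (primrec_delB.to_comp.comp Computable.snd)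
          (Computable.fst.comp Computable.fst)
      have hlist : Computable (fun x : (BStr × ℕ) × List Sym3 =>
          listsLen (x.2.length + x.1.2.unpair.2)) :=
        primrec_listsLen.to_comp.comp
          (Primrec.nat_add.to_comp.comp (Computable.list_length.comp Computable.snd)
            ((Computable.snd.comp (Computable.unpair.comp
              (Computable.snd.comp Computable.fst)))))
      have hpred : Computable₂ (fun (x : (BStr × ℕ) × List Sym3) (τ' : List Sym3) =>
          !(f' τ' && pfxb x.2 τ')) := by
        have ha1 : Computable (fun y : ((BStr × ℕ) × List Sym3) × List Sym3 => f' y.2) :=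
          hf'c.comp Computable.snd
        have ha2 : Computable (fun y : ((BStr × ℕ) × List Sym3) × List Sym3 =>
            pfxb y.1.2 y.2) :=
          primrec_pfxb.to_comp.comp (Computable.snd.comp Computable.fst) Computable.snd
        have hin : Computable (fun y : ((BStr × ℕ) × List Sym3) × List Sym3 =>
            f' y.2 && pfxb y.1.2 y.2) := by
          have h0 := Computable.cond ha1 ha2 (Computable.const false)
          refine h0.of_eq fun y => ?_
          cases f' y.2 <;> simp
        have h1 := Computable.cond hin (Computable.const false) (Computable.const true)
        refine Computable₂.mk (h1.of_eq fun y => ?_)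
        cases f' y.2 && pfxb y.1.2 y.2 <;> simp
      have hmap : Computable (fun x : (BStr × ℕ) × List Sym3 =>
          (listsLen (x.2.length + x.1.2.unpair.2)).map
            (fun τ' => !(f' τ' && pfxb x.2 τ'))) :=
        computable_mapList ([] : List Sym3) hlist hpred
      have hall := primrec_allId.to_comp.comp hmap
      exact Computable₂.mk
        (Computable.cond c1 (Computable.cond c2 hall (Computable.const false))
          (Computable.const false))
    exact Computable₂.mk (Computable.option_casesOn ho (Computable.const false) hg)
  · -- the iff
    intro δ
    constructor
    · rintro ⟨τ, h1, h2, n, hn⟩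
      refine ⟨Nat.pair (Encodable.encode τ) n, ?_⟩
      simp only [Nat.unpair_pair, Encodable.encodek]
      show cond (TB σ τ) (cond (decide (delB τ = δ))
        (allId ((listsLen (τ.length + n)).map
          (fun τ' => !(f' τ' && pfxb τ τ')))) false) false = true
      rw [h1, cond_true, decide_eq_true h2, cond_true]
      rw [allId_iff]
      intro b hb
      obtain ⟨τ', hτ', rfl⟩ := List.mem_map.mp hb
      cases hft : f' τ' <;> cases hpt : pfxb τ τ' <;> simp
      exact hn τ' ((mem_listsLen _ _).mp hτ') ((hf' τ').mpr hft) ((pfxb_iff _ _).mp hpt)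
    · rintro ⟨m, hm⟩
      replace hm : Option.casesOn (Encodable.decode (α := List Sym3) m.unpair.1) false
          (fun τ => cond (TB σ τ) (cond (decide (delB τ = δ))
            (allId ((listsLen (τ.length + m.unpair.2)).map
              (fun τ' => !(f' τ' && pfxb τ τ')))) false) false) = true := hm
      cases hdec : Encodable.decode (α := List Sym3) m.unpair.1 with
      | none => rw [hdec] at hm; exact absurd hm (by simp)
      | some τ =>
        rw [hdec] at hm
        have hm' : cond (TB σ τ) (cond (decide (delB τ = δ))
            (allId ((listsLen (τ.length + m.unpair.2)).map
              (fun τ' => !(f' τ' && pfxb τ τ')))) false) false = true := hm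
        rw [cond_ff_iff] at hm'
        obtain ⟨h1, hm''⟩ := hm'
        rw [cond_ff_iff] at hm''
        obtain ⟨h2, h3⟩ := hm''
        refine ⟨τ, h1, of_decide_eq_true h2, m.unpair.2, ?_⟩
        intro τ' hlen' hT' hpfx
        have hb := (allId_iff _).mp h3 (!(f' τ' && pfxb τ τ'))
          (List.mem_map.mpr ⟨τ', (mem_listsLen _ _).mpr hlen', rfl⟩)
        rw [(hf' τ').mp hT', (pfxb_iff _ _).mpr hpfx] at hb
        simp at hb

include hconv in
theorem thin_clopen (T' : Set (List Sym3))
    (hQsub : paths T' ⊆ paths {τ : List Sym3 | TB σ τ = true}) (m0 : ℕ)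
    (hcase : (∀ X ∈ paths T', seg X m0 ≠ segCf σ A m0) ∨
      (∀ X ∈ paths {τ : List Sym3 | TB σ τ = true},
        seg X m0 = segCf σ A m0 → X ∈ paths T')) :
    ∃ N, ClopenC N ∧ paths T' = paths {τ : List Sym3 | TB σ τ = true} ∩ N := by
  classical
  obtain ⟨L, hLm, hfrz⟩ := off_path_frz hconv m0
  set S := {X : ℕ → Sym3 | X ∈ paths T' ∧ seg X m0 ≠ segCf σ A m0} with hS
  have hTB : ∀ X ∈ paths T', ∀ k, TB σ (seg X k) = true := fun X hX k => hQsub hX k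
  have hSfrz : ∀ X ∈ S, ∀ n ≥ L, X n = none := fun X hX =>
    hfrz X (hTB X hX.1) hX.2
  have hinj : Set.InjOn (fun X => seg X L) S := by
    intro X hX X' hX' h
    exact isolate (hSfrz X hX) (hSfrz X' hX') h
  have himgfin : ((fun X => seg X L) '' S).Finite := by
    apply Set.Finite.subset ((listsLen L).finite_toSet)
    rintro _ ⟨X, _, rfl⟩
    exact (mem_listsLen L _).mpr (seg_length X L)
  have hiso : ∀ X ∈ S, ∀ X' ∈ paths {τ : List Sym3 | TB σ τ = true},
      seg X' L = seg X L → X' = X := by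
    intro X hX X' hX' h
    have hXm0 : seg X' m0 = seg X m0 := by
      have h2 := congrArg (fun l => l.take m0) h
      simpa [seg_take _ hLm] using h2
    have hX'frz : ∀ n ≥ L, X' n = none :=
      hfrz X' (fun k => hX' k) (by rw [hXm0]; exact hX.2)
    exact isolate hX'frz (hSfrz X hX) h
  rcases hcase with ha | hb
  · refine ⟨{X | ∃ t ∈ himgfin.toFinset, seg X t.length = t}, ⟨himgfin.toFinset, rfl⟩, ?_⟩
    ext X
    constructor
    · intro hX
      have hXS : X ∈ S := ⟨hX, ha X hX⟩
      exact ⟨hQsub hX, ⟨seg X L, (Set.Finite.mem_toFinset _).mpr ⟨X, hXS, rfl⟩,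
        by rw [seg_length]⟩⟩
    · rintro ⟨hXT, t, htF, hXt⟩
      obtain ⟨X0, hX0S, rfl⟩ := (Set.Finite.mem_toFinset _).mp htF
      rw [seg_length] at hXt
      rw [hiso X0 hX0S X hXT hXt]
      exact hX0S.1
  · refine ⟨{X | ∃ t ∈ insert (segCf σ A m0) himgfin.toFinset, seg X t.length = t},
      ⟨_, rfl⟩, ?_⟩
    ext X
    constructor
    · intro hX
      refine ⟨hQsub hX, ?_⟩
      by_cases hc : seg X m0 = segCf σ A m0
      · exact ⟨segCf σ A m0, Finset.mem_insert_self _ _, by rw [segCf_length]; exact hc⟩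
      · exact ⟨seg X L, Finset.mem_insert_of_mem
          ((Set.Finite.mem_toFinset _).mpr ⟨X, ⟨hX, hc⟩, rfl⟩), by rw [seg_length]⟩
    · rintro ⟨hXT, t, htF, hXt⟩
      rcases Finset.mem_insert.mp htF with rfl | htFb
      · rw [segCf_length] at hXt
        exact hb X hXT hXt
      · obtain ⟨X0, hX0S, rfl⟩ := (Set.Finite.mem_toFinset _).mp htFb
        rw [seg_length] at hXt
        rw [hiso X0 hX0S X hXT hXt]
        exact hX0S.1

end Main

end Aux

/-- every 1-generic degree strictly below 0′ is thin: there is a recursive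
tree `T` over the alphabet `{0,1,B}` such that `[T]` is a thin Π⁰₁ class containing a
path `C ≡_T A`. -/
theorem one_generic_below_zero_jump_thin (A : ℕ → Bool) (hA : OneGeneric A)
    (hle : TuringLE A K) (hlt : ¬ TuringLE K A) :
    ∃ T : Set (List Sym3), RecTree T ∧ ThinPi01 (paths T) ∧
      ∃ C ∈ paths T, TuringEquiv C A := by
  classical
  obtain ⟨Φ, hΦ⟩ := hle
  set σ : ℕ → BStr := Aux.sigs Φ.φ with hσdef
  have hσc : Computable σ := Aux.computable_sigs Φ.comp
  have hconv : ∀ n, ∃ s0, ∀ s ≥ s0, (σ s).take n = seg A n :=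
    fun n => Aux.sigs_conv (φ := Φ.φ) (A := A) Φ.mono hΦ n
  have hlen : ∀ s, (σ s).length = s := fun s => Aux.sigs_length Φ.φ s
  have hTrec : RecTree {τ : List Sym3 | Aux.TB σ τ = true} :=
    ⟨fun τ1 τ2 h h2 => Aux.TB_prefix h h2,
      ⟨Aux.TB σ, Aux.computable_TB hσc, fun τ => Iff.rfl⟩⟩
  have hCmem : Aux.Cpath σ A ∈ paths {τ : List Sym3 | Aux.TB σ τ = true} := by
    intro k
    show Aux.TB σ (seg (Aux.Cpath σ A) k) = true
    rw [Aux.seg_Cpath]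
    exact Aux.TB_segCf k
  have hequiv : TuringEquiv (Aux.Cpath σ A) A := by
    constructor
    · exact ⟨⟨Aux.phiCA σ, Aux.computable_phiCA hσc, fun h1 h2 => Aux.phiCA_mono h1 h2⟩,
        fun n => ⟨n+1, Aux.phiCA_applies n⟩⟩
    · refine ⟨⟨Aux.phiAC, Aux.computable_phiAC, fun h1 h2 => Aux.phiAC_mono h1 h2⟩,
        fun x => ?_⟩
      obtain ⟨n, hn⟩ := Aux.cnt_surj hlen hconv (x+1)
      refine ⟨n, ?_⟩
      show (delB (seg (Aux.Cpath σ A) n)).get? x = some (A x)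
      rw [Aux.seg_Cpath, Aux.delB_segCf]
      unfold Aux.cnt at hn
      exact Aux.seg_get? A (by rw [hn]; omega)
  refine ⟨_, hTrec, ⟨⟨_, hTrec, rfl⟩, ?_⟩, Aux.Cpath σ A, hCmem, hequiv⟩
  intro Q hQ hQsub
  obtain ⟨T', hT'rec, rfl⟩ := hQ
  obtain ⟨hT'tree, f', hf'c, hf'⟩ := hT'rec
  have hV := Aux.sigma01_V hσc hf'c T' hf'
  rcases hA _ hV with hM | hAv
  · -- `A` meets `V`: no path of the subclass goes through the distinguished node.
    obtain ⟨k, τ0, hτ0TB, hτ0δ, n0, hn0⟩ := hM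
    have hδlen : delB τ0 = seg A (delB τ0).length := by
      rw [hτ0δ, Aux.seg_length]
    have hτ0C : τ0 = Aux.segCf σ A τ0.length := Aux.true_node_eq hτ0TB hδlen
    have hcaseA : ∀ X ∈ paths T', seg X τ0.length ≠ Aux.segCf σ A τ0.length := by
      intro X hX heq
      apply hn0 (seg X (τ0.length + n0)) (by simp) (hX (τ0.length + n0))
      have hp := Aux.seg_prefix X (Nat.le_add_right τ0.length n0)
      rw [heq, ← hτ0C] at hp
      exact hp
    exact Aux.thin_clopen hconv T' hQsub τ0.length (Or.inl hcaseA)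
  · -- `A` avoids `V`: the subclass captures a whole cylinder around the distinguished path.
    obtain ⟨k, hk⟩ := hAv
    obtain ⟨ms, hms⟩ := Aux.cnt_surj hlen hconv k
    have hτsδ : delB (Aux.segCf σ A ms) = seg A k := by
      have h := Aux.delB_segCf (σ := σ) (A := A) ms
      unfold Aux.cnt at hms
      rw [hms] at h
      exact h
    have hmem : ∀ τ : List Sym3, Aux.TB σ τ = true → seg A k <+: delB τ → τ ∈ T' := by
      intro τ hTBτ hpf
      by_contra hτ'
      refine hk (delB τ) hpf ⟨τ, hTBτ, rfl, 0, fun τ' hlen' hT'' hpfx => hτ' ?_⟩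
      have heq : τ = τ' := Aux.prefix_eq_of_length hpfx (by omega)
      rwa [heq]
    have hcaseB : ∀ X ∈ paths {τ : List Sym3 | Aux.TB σ τ = true},
        seg X ms = Aux.segCf σ A ms → X ∈ paths T' := by
      intro X hX heq n
      rcases le_or_gt n ms with h | h
      · have hpfx : seg X n <+: Aux.segCf σ A ms := by
          rw [← heq]
          exact Aux.seg_prefix X h
        have hτsT' : Aux.segCf σ A ms ∈ T' :=
          hmem _ (Aux.TB_segCf ms) (by rw [hτsδ])
        exact hT'tree _ _ hpfx hτsT'
      · apply hmem _ (hX n)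
        rw [← hτsδ, ← heq]
        exact Aux.delB_prefix (Aux.seg_prefix X (le_of_lt h))
    exact Aux.thin_clopen hconv T' hQsub ms (Or.inr hcaseB)
end

section
/- If A is 1-generic and (σ_s) is any recursive approximation of A, then for every infinite r.e. set S of stages, the r.e. set of strings V = { σ_s : s ∈ S } is met by A: some σ_s with s ∈ S is an initial segment of A. (A cannot avoid V.) -/
/-- if `A` is 1-generic and `(σ_s)` is a recursive approximation of `A`,
then for every infinite r.e. set `S` of stages, some `σ_s` with `s ∈ S` is an initial
segment of `A`. -/
theorem one_generic_meets_approx_set (A : ℕ → Bool) (hA : OneGeneric A)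
    (σs : ℕ → BStr) (happ : RecApprox σs A)
    (S : Set ℕ) (hS : REset S) (hSinf : S.Infinite) :
    ∃ s ∈ S, InitSegOf (σs s) A := by
  obtain ⟨hσcomp, hlim⟩ := happ
  obtain ⟨g, hg, hgS⟩ := hS
  -- V = { σs s : s ∈ S }
  set V : Set BStr := {σ | ∃ s ∈ S, σs s = σ} with hV
  have hSig : Sigma01 V := by
    refine ⟨fun σ n => g n.unpair.1 n.unpair.2 && decide (σs n.unpair.1 = σ), ?_, ?_⟩
    · have h1 : Computable fun p : BStr × ℕ => g p.2.unpair.1 p.2.unpair.2 :=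
        hg.comp (Computable.fst.comp (Primrec.unpair.to_comp.comp Computable.snd))
          (Computable.snd.comp (Primrec.unpair.to_comp.comp Computable.snd))
      have h2 : Computable fun p : BStr × ℕ => (decide (σs p.2.unpair.1 = p.1) : Bool) :=
        ((Primrec.eq (α := BStr)).decide.to_comp).comp
          (hσcomp.comp (Computable.fst.comp (Primrec.unpair.to_comp.comp Computable.snd)))
          Computable.fst
      exact (Primrec₂.to_comp (Primrec.and)).comp h1 h2
    · intro σ
      constructor
      · rintro ⟨s, hsS, hseq⟩
        obtain ⟨m, hm⟩ := (hgS s).1 hsS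
        exact ⟨Nat.pair s m, by simp [hm, hseq]⟩
      · rintro ⟨n, hn⟩
        simp only [Bool.and_eq_true, decide_eq_true_eq] at hn
        exact ⟨n.unpair.1, (hgS _).2 ⟨n.unpair.2, hn.1⟩, hn.2⟩
  rcases hA V hSig with hMeet | hAvoid
  · obtain ⟨k, s, hsS, hseq⟩ := hMeet
    refine ⟨s, hsS, ?_⟩
    have hlen : (σs s).length = k := by
      rw [hseq]; simp [seg]
    unfold InitSegOf
    rw [hlen, hseq]
  · exfalso
    obtain ⟨k, hk⟩ := hAvoid
    obtain ⟨s0, hs0⟩ := hlim k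
    obtain ⟨s, hsS, hs⟩ := hSinf.exists_gt s0
    have htake := hs0 s (le_of_lt hs)
    have hpre : seg A k <+: σs s := by
      rw [← htake]; exact List.take_prefix _ _
    exact hk (σs s) hpre ⟨s, hsS, rfl⟩
end
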